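/- arXiv:1511.05637 — 3 statements merged into one kernel-verified Lean document; each statement's English description precedes it below -/
import Mathlib

section
/- Assume E T < ∞. The dual process Y is itself an undelayed renewal sequence: Y_0 = 1 and the gaps between successive 1's of Y are i.i.d. copies of a random variable T_Y with values in {1,2,…}∪{∞} whose distribution satisfies P(T_Y = 1) = P(T = 1)·(1 − α_0), and for every k ≥ 2, P(T_Y = k) = E[(1 − α_{k−1}^{ξ_k}) ∏_{i=1}^{k−1} α_{i−1}^{ξ_i}]; equivalently, P(T_Y ≥ k) = E[∏_{i=1}^{k−1} α_{i−1}^{ξ_i}] for all k ≥ 2. -/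
open MeasureTheory ProbabilityTheory Filter Set
open scoped ENNReal Classical

noncomputable section

namespace RenewalPerc

variable {Ω : Type*} [MeasurableSpace Ω]

/-- The undelayed renewal sequence `ξ` built from the inter-arrival times `T`:
`ξ_i = 1` iff `i` is a renewal time, i.e. iff some partial sum of the
inter-arrival times equals `i`. -/
def xi (T : ℕ → Ω → ℕ∞) (i : ℕ) (ω : Ω) : ℕ :=
  if ∃ j : ℕ, (∑ l ∈ Finset.range j, T l ω) = (i : ℕ∞) then 1 else 0

/-- The expectation `E T` of the inter-arrival time, in `ℝ≥0∞`. -/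
def ET (P : Measure Ω) (T : ℕ → Ω → ℕ∞) : ℝ≥0∞ :=
  ∫⁻ ω, (T 0 ω : ℝ≥0∞) ∂P

/-- `α_n = P(R ≤ n)`, as an extended nonnegative real. -/
def alphaE (P : Measure Ω) (R : ℕ → Ω → ℕ) (n : ℕ) : ℝ≥0∞ :=
  P {ω | R 0 ω ≤ n}

/-- `α_n = P(R ≤ n)`, as a real number. -/
def alphaR (P : Measure Ω) (R : ℕ → Ω → ℕ) (n : ℕ) : ℝ :=
  (alphaE P R n).toReal

/-- `P(ξ_i = 1)`, as a real number. -/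
def pxi (P : Measure Ω) (T : ℕ → Ω → ℕ∞) (i : ℕ) : ℝ :=
  (P {ω | xi T i ω = 1}).toReal

/-- The random interval `C_l = {l+1, …, l+R_l}` if `ξ_l = 1` (empty if `R_l = 0`),
and `C_l = ∅` otherwise. -/
def cover (T : ℕ → Ω → ℕ∞) (R : ℕ → Ω → ℕ) (l : ℕ) (ω : Ω) : Set ℕ :=
  if xi T l ω = 1 then Set.Ioc l (l + R l ω) else ∅

/-- The connectivity relation `i ↔ j`. -/
def connects (T : ℕ → Ω → ℕ∞) (R : ℕ → Ω → ℕ) (i j : ℕ) (ω : Ω) : Prop :=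
  xi T i ω = 1 ∧ xi T j ω = 1 ∧
    ∃ m n, m ≤ n ∧ n < j ∧ Set.Icc i j ⊆ ⋃ l ∈ Set.Icc m n, cover T R l ω

/-- The percolation event `A = ⋂_{i ≥ 1} ⋃_{j ≥ i} {0 ↔ j}`. -/
def percSet (T : ℕ → Ω → ℕ∞) (R : ℕ → Ω → ℕ) : Set Ω :=
  ⋂ i ∈ {i : ℕ | 1 ≤ i}, ⋃ j ∈ {j : ℕ | i ≤ j}, {ω | connects T R 0 j ω}

/-- `B_n`: the sets of newly informed individuals of the dual (reverse firework)
process. -/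
def Bset (T : ℕ → Ω → ℕ∞) (R : ℕ → Ω → ℕ) : ℕ → Ω → Set ℕ
  | 0 => fun _ => {0}
  | n + 1 => fun ω =>
      {i | xi T i ω = 1 ∧ (Set.Ico (i - R i ω) i ∩ Bset T R n ω).Nonempty ∧
        ∀ m, m ≤ n → i ∉ Bset T R m ω}

/-- The dual process `Y`: `Y_i = 1` iff site `i` is eventually informed. -/
def Ydual (T : ℕ → Ω → ℕ∞) (R : ℕ → Ω → ℕ) (i : ℕ) (ω : Ω) : ℕ :=
  if ∃ n, i ∈ Bset T R n ω then 1 else 0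

/-- The successive positions of the `1`'s of the dual process `Y`
(taking the value `∞` once there are no more `1`'s). -/
def renewalY (T : ℕ → Ω → ℕ∞) (R : ℕ → Ω → ℕ) : ℕ → Ω → ℕ∞
  | 0 => fun _ => 0
  | j + 1 => fun ω =>
      sInf {x : ℕ∞ | renewalY T R j ω < x ∧ ∃ i : ℕ, x = (i : ℕ∞) ∧ Ydual T R i ω = 1}

/-- The gaps between successive `1`'s of the dual process `Y`. -/
def gapY (T : ℕ → Ω → ℕ∞) (R : ℕ → Ω → ℕ) (j : ℕ) (ω : Ω) : ℕ∞ :=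
  renewalY T R (j + 1) ω - renewalY T R j ω

/-- `q_i^* = max_{n ≤ i} q_n`. -/
def qstar (q : ℕ → ℝ) (i : ℕ) : ℝ :=
  (Finset.range (i + 1)).sup' Finset.nonempty_range_add_one q

/-- `C_k = (∑_{j=1}^k ∏_{i=k}^{k+j-1} q_i^*)^2`. -/
def Cseq (q : ℕ → ℝ) (k : ℕ) : ℝ :=
  (∑ j ∈ Finset.Icc 1 k, ∏ i ∈ Finset.range j, qstar q (k + i)) ^ 2

/-- The coupled house-of-cards chains, all driven by the same uniform
variables `U`, started at `n`. -/
def hoc (q : ℕ → ℝ) (U : ℕ → Ω → ℝ) (n : ℕ) : ℕ → Ω → ℕ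
  | 0 => fun _ => n
  | l + 1 => fun ω => if U (l + 1) ω ≤ q (hoc q U n l ω) then hoc q U n l ω + 1 else 0

/-- The merging time `T_k = inf{l ≥ 1 : ζ^{(n)}_l = 0 for all n = 0,…,k}`. -/
def mergeT (q : ℕ → ℝ) (U : ℕ → Ω → ℝ) (k : ℕ) (ω : Ω) : ℕ∞ :=
  sInf {x : ℕ∞ | ∃ l : ℕ, x = (l : ℕ∞) ∧ 1 ≤ l ∧ ∀ n, n ≤ k → hoc q U n l ω = 0}


/-! ### Deterministic renewal pattern lemmas -/

def psum (f : ℕ → ℕ∞) (j : ℕ) : ℕ∞ := ∑ l ∈ Finset.range j, f l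

def Xi (i : ℕ) (f : ℕ → ℕ∞) : ℕ := if ∃ j : ℕ, psum f j = (i : ℕ∞) then 1 else 0

lemma xi_eq_Xi (T : ℕ → Ω → ℕ∞) (i : ℕ) (ω : Ω) : xi T i ω = Xi i (fun l => T l ω) := rfl

def tl (f : ℕ → ℕ∞) : ℕ → ℕ∞ := fun l => f (l + 1)

lemma psum_zero (f : ℕ → ℕ∞) : psum f 0 = 0 := by simp [psum]

lemma psum_succ' (f : ℕ → ℕ∞) (j : ℕ) : psum f (j + 1) = psum (tl f) j + f 0 := by
  simpa [psum, tl] using Finset.sum_range_succ' f j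

lemma psum_one (f : ℕ → ℕ∞) : psum f 1 = f 0 := by simp [psum]

lemma psum_mono (f : ℕ → ℕ∞) : Monotone (psum f) := fun j j' h =>
  Finset.sum_le_sum_of_subset (Finset.range_subset_range.2 h)

lemma le_psum (f : ℕ → ℕ∞) {j : ℕ} (hj : 1 ≤ j) : f 0 ≤ psum f j := by
  simpa [psum_one] using psum_mono f hj

lemma Xi_eq_one_iff {i : ℕ} {f : ℕ → ℕ∞} : Xi i f = 1 ↔ ∃ j : ℕ, psum f j = (i : ℕ∞) := by
  unfold Xi; split <;> simp_all

lemma Xi_eq_zero_iff {i : ℕ} {f : ℕ → ℕ∞} : Xi i f = 0 ↔ ¬ ∃ j : ℕ, psum f j = (i : ℕ∞) := by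
  unfold Xi; split <;> simp_all

lemma Xi_zero_of_lt {f : ℕ → ℕ∞} {i : ℕ} (h1 : 1 ≤ i) (h : (i : ℕ∞) < f 0) :
    Xi i f = 0 := by
  rw [Xi_eq_zero_iff]
  rintro ⟨j, hj⟩
  rcases Nat.eq_zero_or_pos j with rfl | hjpos
  · rw [psum_zero] at hj
    have : i = 0 := by exact_mod_cast hj.symm
    omega
  · exact absurd hj (ne_of_gt (lt_of_lt_of_le h (le_psum f hjpos)))

lemma Xi_f0 {f : ℕ → ℕ∞} {q : ℕ} (h : f 0 = (q : ℕ∞)) : Xi q f = 1 :=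
  Xi_eq_one_iff.2 ⟨1, by rw [psum_one, h]⟩

lemma Xi_shift {f : ℕ → ℕ∞} {q i : ℕ} (hq : f 0 = (q : ℕ∞)) (hi : 1 ≤ i) :
    Xi (q + i) f = Xi i (tl f) := by
  have key : (∃ j : ℕ, psum f j = ((q + i : ℕ) : ℕ∞)) ↔ ∃ j : ℕ, psum (tl f) j = (i : ℕ∞) := by
    constructor
    · rintro ⟨j, hj⟩
      rcases Nat.eq_zero_or_pos j with rfl | hjpos
      · rw [psum_zero] at hj
        have : q + i = 0 := by exact_mod_cast hj.symm
        omega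
      · obtain ⟨j', rfl⟩ := Nat.exists_eq_succ_of_ne_zero hjpos.ne'
        rw [Nat.succ_eq_add_one, psum_succ', hq] at hj
        refine ⟨j', ?_⟩
        have : (q : ℕ∞) + psum (tl f) j' = (q : ℕ∞) + (i : ℕ∞) := by
          rw [add_comm] at hj
          rw [hj]; push_cast; ring
        exact WithTop.add_left_cancel (WithTop.coe_ne_top) this
    · rintro ⟨j, hj⟩
      exact ⟨j + 1, by rw [psum_succ', hj, hq]; push_cast; ring⟩
  unfold Xi
  rw [if_congr key rfl rfl]

lemma pattern_empty_iff {f : ℕ → ℕ∞} (hf : ∀ l, 1 ≤ f l) (n : ℕ) :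
    (∀ i ∈ Finset.Icc 1 n, Xi i f = 0) ↔ (n : ℕ∞) < f 0 := by
  constructor
  · intro h
    by_contra hle
    push_neg at hle
    have hne : f 0 ≠ ⊤ := by
      intro h'
      rw [h'] at hle
      exact absurd (top_le_iff.1 hle) (by simp)
    lift f 0 to ℕ using hne with v hv
    have hv1 : 1 ≤ v := by
      have := hf 0; rw [← hv] at this; exact_mod_cast this
    have hvn : v ≤ n := by exact_mod_cast hle
    have := h v (Finset.mem_Icc.2 ⟨hv1, hvn⟩)
    rw [Xi_f0 hv.symm] at this
    exact one_ne_zero this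
  · intro h i hi
    obtain ⟨hi1, hin⟩ := Finset.mem_Icc.1 hi
    exact Xi_zero_of_lt hi1 (lt_of_le_of_lt (by exact_mod_cast hin) h)

lemma mem_shift_erase {B : Finset ℕ} {q i : ℕ} (hmin : ∀ b ∈ B, q ≤ b) (hi : 1 ≤ i) :
    i ∈ (B.erase q).image (· - q) ↔ q + i ∈ B := by
  constructor
  · rintro hmem
    obtain ⟨b, hb, rfl⟩ := Finset.mem_image.1 hmem
    have hbB := Finset.mem_of_mem_erase hb
    have hbq := hmin b hbB
    have : q + (b - q) = b := by omega
    rwa [this]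
  · intro hmem
    refine Finset.mem_image.2 ⟨q + i, Finset.mem_erase.2 ⟨by omega, hmem⟩, by omega⟩

lemma pattern_cons_iff {f : ℕ → ℕ∞} (hf : ∀ l, 1 ≤ f l) {n : ℕ} (B : Finset ℕ)
    (hB : B.Nonempty) (hBs : B ⊆ Finset.Icc 1 n) :
    (∀ i ∈ Finset.Icc 1 n, Xi i f = (if i ∈ B then 1 else 0)) ↔
      (f 0 = (B.min' hB : ℕ∞) ∧
        ∀ i ∈ Finset.Icc 1 (n - B.min' hB),
          Xi i (tl f) =
            (if i ∈ (B.erase (B.min' hB)).image (· - B.min' hB) then 1 else 0)) := by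
  set q := B.min' hB with hqdef
  have hqB : q ∈ B := B.min'_mem hB
  have hmin : ∀ b ∈ B, q ≤ b := fun b hb => B.min'_le b hb
  have hq1 : 1 ≤ q := (Finset.mem_Icc.1 (hBs hqB)).1
  have hqn : q ≤ n := (Finset.mem_Icc.1 (hBs hqB)).2
  constructor
  · intro pat
    have hXiq : Xi q f = 1 := by
      have := pat q (Finset.mem_Icc.2 ⟨hq1, hqn⟩)
      rwa [if_pos hqB] at this
    have hf0 : f 0 = (q : ℕ∞) := by
      have hle : f 0 ≤ (q : ℕ∞) := by
        by_contra hlt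
        push_neg at hlt
        rw [Xi_zero_of_lt hq1 hlt] at hXiq
        exact one_ne_zero hXiq.symm
      have hne : f 0 ≠ ⊤ := fun h' => by
        rw [h'] at hle; exact absurd (top_le_iff.1 hle) (by simp)
      lift f 0 to ℕ using hne with v hv
      have hv1 : 1 ≤ v := by
        have := hf 0; rw [← hv] at this; exact_mod_cast this
      have hvq : v ≤ q := by exact_mod_cast hle
      have hvB : v ∈ B := by
        have := pat v (Finset.mem_Icc.2 ⟨hv1, le_trans hvq hqn⟩)
        rw [Xi_f0 hv.symm] at this
        by_contra hvB
        rw [if_neg hvB] at this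
        exact one_ne_zero this
      have : q ≤ v := hmin v hvB
      exact_mod_cast congrArg (Nat.cast : ℕ → ℕ∞) (le_antisymm hvq this)
    refine ⟨hf0, fun i hi => ?_⟩
    obtain ⟨hi1, hin⟩ := Finset.mem_Icc.1 hi
    have h1 : Xi i (tl f) = Xi (q + i) f := (Xi_shift hf0 hi1).symm
    have h2 := pat (q + i) (Finset.mem_Icc.2 ⟨by omega, by omega⟩)
    rw [h1, h2]
    by_cases hmem : q + i ∈ B
    · rw [if_pos hmem, if_pos ((mem_shift_erase hmin hi1).2 hmem)]
    · rw [if_neg hmem, if_neg (fun h => hmem ((mem_shift_erase hmin hi1).1 h))]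
  · rintro ⟨hf0, pat'⟩ i hi
    obtain ⟨hi1, hin⟩ := Finset.mem_Icc.1 hi
    rcases lt_trichotomy i q with hlt | rfl | hgt
    · have hiB : i ∉ B := fun h => absurd (hmin i h) (by omega)
      rw [if_neg hiB, Xi_zero_of_lt hi1 (by rw [hf0]; exact_mod_cast hlt)]
    · rw [if_pos hqB, Xi_f0 hf0]
    · have hj1 : 1 ≤ i - q := by omega
      have hjn : i - q ≤ n - q := by omega
      have h1 : Xi i f = Xi (i - q) (tl f) := by
        have := Xi_shift hf0 hj1
        rwa [show q + (i - q) = i by omega] at this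
      rw [h1, pat' (i - q) (Finset.mem_Icc.2 ⟨hj1, hjn⟩)]
      by_cases hmem : i ∈ B
      · rw [if_pos hmem, if_pos ((mem_shift_erase hmin hj1).2 (by rwa [show q + (i - q) = i by omega]))]
      · rw [if_neg hmem, if_neg (fun h => by
          have := (mem_shift_erase hmin hj1).1 h
          rw [show q + (i - q) = i by omega] at this
          exact hmem this)]

/-! ### Cylinder representation -/

def ZF (n : ℕ) (B : Finset ℕ) : ℕ → Set ℕ∞ := fun l =>
  if hB : B.Nonempty then
    if l = 0 then {((B.min' hB : ℕ) : ℕ∞)}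
    else ZF (n - B.min' hB) ((B.erase (B.min' hB)).image (· - B.min' hB)) (l - 1)
  else if l = 0 then {x | (n : ℕ∞) < x} else Set.univ
termination_by B.card
decreasing_by
  exact Finset.card_image_le.trans_lt (Finset.card_erase_lt_of_mem (B.min'_mem hB))

lemma ZF_empty (n : ℕ) (l : ℕ) :
    ZF n ∅ l = if l = 0 then {x | (n : ℕ∞) < x} else Set.univ := by
  rw [ZF]; simp

lemma ZF_pos (n : ℕ) {B : Finset ℕ} (hB : B.Nonempty) :
    ZF n B 0 = {((B.min' hB : ℕ) : ℕ∞)} := by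
  rw [ZF]; simp [hB]

lemma ZF_succ (n : ℕ) {B : Finset ℕ} (hB : B.Nonempty) (l : ℕ) :
    ZF n B (l + 1) =
      ZF (n - B.min' hB) ((B.erase (B.min' hB)).image (· - B.min' hB)) l := by
  rw [ZF]; simp [hB]

lemma card_shift_erase {B : Finset ℕ} (hB : B.Nonempty)
    (hmin : ∀ b ∈ B, B.min' hB ≤ b) :
    ((B.erase (B.min' hB)).image (· - B.min' hB)).card = B.card - 1 := by
  rw [Finset.card_image_of_injOn, Finset.card_erase_of_mem (B.min'_mem hB)]
  intro a ha b hb hab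
  have hab' : a - B.min' hB = b - B.min' hB := hab
  have ha' := hmin a (Finset.mem_of_mem_erase ha)
  have hb' := hmin b (Finset.mem_of_mem_erase hb)
  have ha2 := (Finset.mem_erase.1 ha).1
  have hb2 := (Finset.mem_erase.1 hb).1
  omega

lemma shift_erase_subset {B : Finset ℕ} {n q : ℕ} (hBs : B ⊆ Finset.Icc 1 n)
    (hmin : ∀ b ∈ B, q ≤ b) :
    (B.erase q).image (· - q) ⊆ Finset.Icc 1 (n - q) := by
  intro x hx
  obtain ⟨b, hb, rfl⟩ := Finset.mem_image.1 hx
  have h1 := Finset.mem_erase.1 hb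
  have h2 := Finset.mem_Icc.1 (hBs h1.2)
  have h3 := hmin b h1.2
  exact Finset.mem_Icc.2 ⟨by omega, by omega⟩

variable {T : ℕ → Ω → ℕ∞} {R : ℕ → Ω → ℕ}

lemma pattern_eq_cylinder (hT1 : ∀ j ω, 1 ≤ T j ω) :
    ∀ (c : ℕ) (B : Finset ℕ), B.card = c → ∀ (n r : ℕ), B ⊆ Finset.Icc 1 n →
    {ω : Ω | ∀ i ∈ Finset.Icc 1 n, Xi i (fun l => T (r + l) ω) = (if i ∈ B then 1 else 0)} =
      ⋂ l ∈ Finset.range (B.card + 1), {ω | T (r + l) ω ∈ ZF n B l} := by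
  intro c
  induction c using Nat.strong_induction_on with
  | _ c IH =>
    intro B hc n r hBs
    rcases B.eq_empty_or_nonempty with rfl | hB
    · ext ω
      simp only [Set.mem_setOf_eq, Finset.notMem_empty, if_false, Set.mem_iInter,
        Finset.card_empty, zero_add, Finset.mem_range, Nat.lt_one_iff]
      constructor
      · intro h
        intro l hl; subst hl
        rw [ZF_empty]
        simp only [if_pos rfl, Set.mem_setOf_eq]
        exact (pattern_empty_iff (fun l => hT1 (r + l) ω) n).1 h
      · intro h
        have := h 0 rfl
        rw [ZF_empty] at this
        simp only [if_pos rfl, Set.mem_setOf_eq, add_zero] at this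
        exact (pattern_empty_iff (fun l => hT1 (r + l) ω) n).2 this
    · set q := B.min' hB with hq
      set B' := (B.erase q).image (· - q) with hB'
      have hmin : ∀ b ∈ B, q ≤ b := fun b hb => B.min'_le b hb
      have hcard' : B'.card = B.card - 1 := (card_shift_erase hB hmin : _)
      have hcardpos : 1 ≤ B.card := Finset.card_pos.2 hB
      have hB's : B' ⊆ Finset.Icc 1 (n - q) := (shift_erase_subset hBs hmin : _)
      have htail : ∀ ω : Ω, tl (fun l => T (r + l) ω) = fun l => T ((r + 1) + l) ω := by
        intro ω; funext l
        have hrl : r + (l + 1) = (r + 1) + l := by omega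
        simp only [tl, hrl]
      have hlt : B'.card < c := by rw [hcard']; omega
      have step := IH B'.card hlt B' rfl (n - q) (r + 1) hB's
      ext ω
      simp only [Set.mem_setOf_eq]
      rw [pattern_cons_iff (fun l => hT1 (r + l) ω) B hB hBs]
      have hmem2 : (ω ∈ ⋂ l ∈ Finset.range (B.card + 1), {ω | T (r + l) ω ∈ ZF n B l}) ↔
          (T r ω ∈ ZF n B 0 ∧
            ω ∈ ⋂ l ∈ Finset.range (B'.card + 1), {ω | T ((r + 1) + l) ω ∈ ZF (n - q) B' l}) := by
        simp only [Set.mem_iInter, Finset.mem_range, Set.mem_setOf_eq]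
        constructor
        · intro h
          refine ⟨by simpa using h 0 (by omega), fun l hl => ?_⟩
          have := h (l + 1) (by omega)
          rwa [ZF_succ n hB l, show r + (l + 1) = (r + 1) + l by omega] at this
        · rintro ⟨h0, h⟩ l hl
          rcases Nat.eq_zero_or_pos l with rfl | hlpos
          · simpa using h0
          · obtain ⟨l', rfl⟩ := Nat.exists_eq_succ_of_ne_zero hlpos.ne'
            rw [Nat.succ_eq_add_one, ZF_succ n hB l', show r + (l' + 1) = (r + 1) + l' by omega]
            exact h l' (by omega)
      rw [hmem2, ← step, ZF_pos n hB]
      simp only [Set.mem_singleton_iff, Set.mem_setOf_eq, htail ω]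
      constructor
      · rintro ⟨h1, h2⟩; exact ⟨h1, h2⟩
      · rintro ⟨h1, h2⟩; exact ⟨h1, h2⟩

lemma map_single (P : Measure Ω) (hTmeas : ∀ j, Measurable (T j))
    (hTident : ∀ j, Measure.map (T j) P = Measure.map (T 0) P) (j : ℕ) (s : Set ℕ∞) :
    P {ω | T j ω ∈ s} = P {ω | T 0 ω ∈ s} := by
  have hs : MeasurableSet s := .of_discrete
  have h1 : {ω | T j ω ∈ s} = T j ⁻¹' s := rfl
  have h2 : {ω | T 0 ω ∈ s} = T 0 ⁻¹' s := rfl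
  rw [h1, h2, ← Measure.map_apply (hTmeas j) hs, hTident j, Measure.map_apply (hTmeas 0) hs]

lemma prob_cylinder (P : Measure Ω) (hTmeas : ∀ j, Measurable (T j))
    (hTindep : iIndepFun T P)
    (hTident : ∀ j, Measure.map (T j) P = Measure.map (T 0) P)
    (n : ℕ) (B : Finset ℕ) (r : ℕ) :
    P (⋂ l ∈ Finset.range (B.card + 1), {ω | T (r + l) ω ∈ ZF n B l}) =
      ∏ l ∈ Finset.range (B.card + 1), P {ω | T 0 ω ∈ ZF n B l} := by
  classical
  have hinj : Function.Injective (r + ·) := fun a b h => by simpa using h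
  have key := hTindep.measure_inter_preimage_eq_mul
    (S := (Finset.range (B.card + 1)).image (r + ·))
    (sets := fun i => ZF n B (i - r)) (fun i _ => .of_discrete)
  have hset : (⋂ l ∈ Finset.range (B.card + 1), {ω : Ω | T (r + l) ω ∈ ZF n B l}) =
      ⋂ i ∈ (Finset.range (B.card + 1)).image (r + ·), T i ⁻¹' ZF n B (i - r) := by
    ext ω
    simp only [Set.mem_iInter, Finset.mem_image, Finset.mem_range, Set.mem_setOf_eq,
      Set.mem_preimage]
    constructor
    · rintro h i ⟨l, hl, rfl⟩
      simpa [show r + l - r = l by omega] using h l hl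
    · intro h l hl
      have := h (r + l) ⟨l, hl, rfl⟩
      simpa [show r + l - r = l by omega] using this
  rw [hset, key, Finset.prod_image (fun a _ b _ h => hinj h)]
  refine Finset.prod_congr rfl fun l _ => ?_
  have hz : (fun i => ZF n B (i - r)) (r + l) = ZF n B l := by
    simp only [show r + l - r = l by omega]
  rw [show r + l - r = l by omega]
  exact map_single P hTmeas hTident (r + l) _

def pcylP (P : Measure Ω) (T : ℕ → Ω → ℕ∞) (n : ℕ) (B : Finset ℕ) : ℝ≥0∞ :=
  ∏ l ∈ Finset.range (B.card + 1), P {ω | T 0 ω ∈ ZF n B l}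

def patE (T : ℕ → Ω → ℕ∞) (n : ℕ) (A : Finset ℕ) : Set Ω :=
  {ω | ∀ i ∈ Finset.Icc 1 n, xi T i ω = (if i ∈ A then 1 else 0)}

lemma prob_patE (P : Measure Ω) (hT1 : ∀ j ω, 1 ≤ T j ω) (hTmeas : ∀ j, Measurable (T j))
    (hTindep : iIndepFun T P)
    (hTident : ∀ j, Measure.map (T j) P = Measure.map (T 0) P)
    {n : ℕ} {A : Finset ℕ} (hAs : A ⊆ Finset.Icc 1 n) :
    P (patE T n A) = pcylP P T n A := by
  have h0 : patE T n A =
      {ω : Ω | ∀ i ∈ Finset.Icc 1 n, Xi i (fun l => T (0 + l) ω) = (if i ∈ A then 1 else 0)} := by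
    unfold patE
    ext ω
    have : (fun l => T (0 + l) ω) = fun l => T l ω := by funext l; rw [zero_add]
    simp only [Set.mem_setOf_eq, this, xi_eq_Xi]
  rw [h0, pattern_eq_cylinder hT1 A.card A rfl n 0 hAs,
    prob_cylinder P hTmeas hTindep hTident n A 0]
  rfl

lemma ZF_concat : ∀ (c : ℕ) (A : Finset ℕ), A.card = c → ∀ (k n : ℕ) (B : Finset ℕ),
    A ⊆ Finset.Icc 1 k → k ∈ A → B ⊆ Finset.Icc 1 n → ∀ l : ℕ,
    ZF (k + n) (A ∪ B.image (· + k)) l =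
      if l < A.card then ZF k A l else ZF n B (l - A.card) := by
  intro c
  induction c using Nat.strong_induction_on with
  | _ c IH =>
    intro A hc k n B hAs hkA hBs l
    have hA : A.Nonempty := ⟨k, hkA⟩
    have hcpos : 1 ≤ A.card := Finset.card_pos.2 hA
    set q := A.min' hA with hq
    have hminA : ∀ a ∈ A, q ≤ a := fun a ha => A.min'_le a ha
    have hq1 : 1 ≤ q := (Finset.mem_Icc.1 (hAs (A.min'_mem hA))).1
    have hqk : q ≤ k := hminA k hkA
    have hU : (A ∪ B.image (· + k)).Nonempty := ⟨k, Finset.mem_union_left _ hkA⟩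
    have hBk : ∀ y ∈ B.image (· + k), k + 1 ≤ y := by
      intro y hy
      obtain ⟨b, hb, rfl⟩ := Finset.mem_image.1 hy
      have := (Finset.mem_Icc.1 (hBs hb)).1
      omega
    have hminU : (A ∪ B.image (· + k)).min' hU = q := by
      apply le_antisymm
      · exact Finset.min'_le _ _ (Finset.mem_union_left _ (A.min'_mem hA))
      · apply Finset.le_min'
        intro y hy
        rcases Finset.mem_union.1 hy with h | h
        · exact hminA y h
        · have := hBk y h; omega
    rcases Nat.eq_zero_or_pos l with rfl | hlpos
    · rw [ZF_pos _ hU, hminU, if_pos (by omega), ZF_pos _ hA]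
    · obtain ⟨l', rfl⟩ := Nat.exists_eq_succ_of_ne_zero hlpos.ne'
      rw [Nat.succ_eq_add_one, ZF_succ _ hU, hminU]
      have herase : ((A ∪ B.image (· + k)).erase q).image (· - q) =
          ((A.erase q).image (· - q)) ∪ B.image (· + (k - q)) := by
        have he2 : (Finset.image (· + k) B).erase q = Finset.image (· + k) B :=
          Finset.erase_eq_of_notMem (fun h => by have := hBk q h; omega)
        rw [Finset.erase_union_distrib, he2, Finset.image_union, Finset.image_image]
        congr 1
        apply Finset.image_congr
        intro b hb
        simp only [Function.comp_apply]
        omega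
      rw [herase, show k + n - q = (k - q) + n by omega]
      rcases eq_or_lt_of_le hqk with rfl | hqlt
      · -- q = k, so A = {q}
        have hAsingle : A = {q} := by
          apply Finset.eq_singleton_iff_unique_mem.2
          exact ⟨A.min'_mem hA, fun a ha => le_antisymm ((Finset.mem_Icc.1 (hAs ha)).2) (hminA a ha)⟩
        have hcard1 : A.card = 1 := by rw [hAsingle]; simp
        have hA' : (A.erase q).image (· - q) = ∅ := by rw [hAsingle]; simp
        have hB0 : B.image (· + (q - q)) = B := by
          rw [show q - q = 0 by omega]
          ext b; simp
        rw [hA', hB0, Finset.empty_union, show q - q + n = n by omega, hcard1,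
          if_neg (by omega), show l' + 1 - 1 = l' by omega]
      · -- q < k
        set A' := (A.erase q).image (· - q) with hA'
        have hcard' : A'.card = A.card - 1 := (card_shift_erase hA hminA : _)
        have hA's : A' ⊆ Finset.Icc 1 (k - q) := (shift_erase_subset hAs hminA : _)
        have hkA' : k - q ∈ A' :=
          Finset.mem_image.2 ⟨k, Finset.mem_erase.2 ⟨by omega, hkA⟩, rfl⟩
        have hlt : A'.card < c := by rw [hcard']; omega
        have := IH A'.card hlt A' rfl (k - q) n B hA's hkA' hBs l'
        rw [this, hcard']
        rcases Nat.lt_or_ge l' (A.card - 1) with h | h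
        · rw [if_pos h, if_pos (by omega), ZF_succ _ hA, ← hq, ← hA']
        · rw [if_neg (by omega), if_neg (by omega), show l' - (A.card - 1) = l' + 1 - A.card by omega]

lemma ZF_last : ∀ (c : ℕ) (A : Finset ℕ), A.card = c → ∀ k : ℕ,
    A ⊆ Finset.Icc 1 k → k ∈ A → ZF k A A.card = {x : ℕ∞ | 0 < x} := by
  intro c
  induction c using Nat.strong_induction_on with
  | _ c IH =>
    intro A hc k hAs hkA
    have hA : A.Nonempty := ⟨k, hkA⟩
    have hcpos : 1 ≤ A.card := Finset.card_pos.2 hA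
    set q := A.min' hA with hq
    have hminA : ∀ a ∈ A, q ≤ a := fun a ha => A.min'_le a ha
    have hqk : q ≤ k := hminA k hkA
    obtain ⟨c', hc'⟩ := Nat.exists_eq_succ_of_ne_zero (by omega : A.card ≠ 0)
    rw [hc', Nat.succ_eq_add_one, ZF_succ _ hA, ← hq]
    set A' := (A.erase q).image (· - q) with hA'
    have hcard' : A'.card = A.card - 1 := (card_shift_erase hA hminA : _)
    rcases eq_or_lt_of_le hqk with rfl | hqlt
    · have hAsingle : A = {q} := by
        apply Finset.eq_singleton_iff_unique_mem.2
        exact ⟨A.min'_mem hA, fun a ha => le_antisymm ((Finset.mem_Icc.1 (hAs ha)).2) (hminA a ha)⟩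
      have hcard1 : A.card = 1 := by rw [hAsingle]; simp
      have hA'e : A' = ∅ := by rw [hA', hAsingle]; simp
      have hc'0 : c' = 0 := by omega
      rw [hA'e, hc'0, ZF_empty, if_pos rfl]
      ext x; simp [Nat.sub_self]
    · have hA's : A' ⊆ Finset.Icc 1 (k - q) := (shift_erase_subset hAs hminA : _)
      have hkA' : k - q ∈ A' :=
        Finset.mem_image.2 ⟨k, Finset.mem_erase.2 ⟨by omega, hkA⟩, rfl⟩
      have hlt : A'.card < c := by rw [hcard']; omega
      have := IH A'.card hlt A' rfl (k - q) hA's hkA'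
      rw [show c' = A'.card by omega]
      exact this

lemma pcylP_concat (P : Measure Ω) [IsProbabilityMeasure P] (hT1 : ∀ j ω, 1 ≤ T j ω)
    {A B : Finset ℕ} {k n : ℕ}
    (hAs : A ⊆ Finset.Icc 1 k) (hkA : k ∈ A) (hBs : B ⊆ Finset.Icc 1 n) :
    pcylP P T (k + n) (A ∪ B.image (· + k)) = pcylP P T k A * pcylP P T n B := by
  classical
  have hdisj : Disjoint A (B.image (· + k)) := by
    rw [Finset.disjoint_left]
    intro a ha hmem
    obtain ⟨b, hb, rfl⟩ := Finset.mem_image.1 hmem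
    have h1 := (Finset.mem_Icc.1 (hAs ha)).2
    have h2 := (Finset.mem_Icc.1 (hBs hb)).1
    omega
  have hcardU : (A ∪ B.image (· + k)).card = A.card + B.card := by
    rw [Finset.card_union_of_disjoint hdisj,
      Finset.card_image_of_injective _ (add_left_injective k)]
  unfold pcylP
  rw [hcardU, show A.card + B.card + 1 = A.card + (B.card + 1) by omega, Finset.prod_range_add]
  have h1 : ∀ l ∈ Finset.range A.card,
      P {ω | T 0 ω ∈ ZF (k + n) (A ∪ B.image (· + k)) l} = P {ω | T 0 ω ∈ ZF k A l} := by
    intro l hl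
    rw [ZF_concat A.card A rfl k n B hAs hkA hBs l, if_pos (Finset.mem_range.1 hl)]
  have h2 : ∀ l ∈ Finset.range (B.card + 1),
      P {ω | T 0 ω ∈ ZF (k + n) (A ∪ B.image (· + k)) (A.card + l)} =
        P {ω | T 0 ω ∈ ZF n B l} := by
    intro l hl
    rw [ZF_concat A.card A rfl k n B hAs hkA hBs (A.card + l), if_neg (by omega),
      show A.card + l - A.card = l by omega]
  rw [Finset.prod_congr rfl h1, Finset.prod_congr rfl h2]
  have hlast : P {ω | T 0 ω ∈ ZF k A A.card} = 1 := by
    rw [ZF_last A.card A rfl k hAs hkA]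
    have : {ω : Ω | T 0 ω ∈ {x : ℕ∞ | 0 < x}} = Set.univ := by
      ext ω
      simp only [Set.mem_setOf_eq, Set.mem_univ, iff_true]
      exact lt_of_lt_of_le zero_lt_one (hT1 0 ω)
    rw [this, measure_univ]
  have : (∏ l ∈ Finset.range (A.card + 1), P {ω | T 0 ω ∈ ZF k A l}) =
      ∏ l ∈ Finset.range A.card, P {ω | T 0 ω ∈ ZF k A l} := by
    rw [Finset.prod_range_succ, hlast, mul_one]
  rw [this]

/-! ### Partition by patterns and core computations -/

lemma xi_cases (T : ℕ → Ω → ℕ∞) (i : ℕ) (ω : Ω) : xi T i ω = 0 ∨ xi T i ω = 1 := by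
  unfold xi; split <;> simp

lemma measurableSet_xi (hTmeas : ∀ j, Measurable (T j)) (i c : ℕ) :
    MeasurableSet {ω | xi T i ω = c} := by
  have h1 : MeasurableSet {ω | xi T i ω = 1} := by
    have : {ω | xi T i ω = 1} =
        ⋃ j : ℕ, {ω | (∑ l ∈ Finset.range j, T l ω) = (i : ℕ∞)} := by
      ext ω
      simp only [Set.mem_setOf_eq, Set.mem_iUnion]
      unfold xi; split <;> simp_all
    rw [this]
    refine MeasurableSet.iUnion fun j => ?_
    have hsum : Measurable (fun ω => ∑ l ∈ Finset.range j, T l ω) :=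
      Finset.measurable_sum _ (fun l _ => hTmeas l)
    exact hsum (measurableSet_singleton _)
  rcases Nat.eq_zero_or_pos c with rfl | hc
  · have : {ω | xi T i ω = 0} = {ω | xi T i ω = 1}ᶜ := by
      ext ω
      rcases xi_cases T i ω with h | h <;> simp [h]
    rw [this]; exact h1.compl
  · rcases Nat.lt_or_ge c 2 with hc2 | hc2
    · have : c = 1 := by omega
      subst this; exact h1
    · have : {ω | xi T i ω = c} = ∅ := by
        ext ω
        rcases xi_cases T i ω with h | h <;> simp [h] <;> omega
      rw [this]; exact MeasurableSet.empty

lemma measurableSet_patE (hTmeas : ∀ j, Measurable (T j)) (n : ℕ) (A : Finset ℕ) :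
    MeasurableSet (patE T n A) := by
  have : patE T n A = ⋂ i ∈ Finset.Icc 1 n, {ω | xi T i ω = (if i ∈ A then 1 else 0)} := by
    ext ω; simp [patE]
  rw [this]
  exact MeasurableSet.biInter (Finset.Icc 1 n).countable_toSet
    (fun i _ => measurableSet_xi hTmeas i _)

def patOf (T : ℕ → Ω → ℕ∞) (n : ℕ) (ω : Ω) : Finset ℕ :=
  (Finset.Icc 1 n).filter (fun i => xi T i ω = 1)

lemma patOf_mem_powerset (n : ℕ) (ω : Ω) :
    patOf T n ω ∈ (Finset.Icc 1 n).powerset :=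
  Finset.mem_powerset.2 (Finset.filter_subset _ _)

lemma mem_patE_patOf (n : ℕ) (ω : Ω) : ω ∈ patE T n (patOf T n ω) := by
  intro i hi
  rcases xi_cases T i ω with h | h
  · rw [h, if_neg]
    simp only [patOf, Finset.mem_filter]
    rintro ⟨-, h1⟩; rw [h] at h1; exact one_ne_zero h1.symm
  · rw [h, if_pos]
    exact Finset.mem_filter.2 ⟨hi, h⟩

lemma patOf_eq_of_mem_patE {n : ℕ} {A : Finset ℕ} (hAs : A ⊆ Finset.Icc 1 n) {ω : Ω}
    (h : ω ∈ patE T n A) : patOf T n ω = A := by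
  ext a
  simp only [patOf, Finset.mem_filter]
  constructor
  · rintro ⟨ha, hxi⟩
    have := h a ha
    rw [hxi] at this
    by_contra haA
    rw [if_neg haA] at this
    exact one_ne_zero this
  · intro haA
    refine ⟨hAs haA, ?_⟩
    have := h a (hAs haA)
    rwa [if_pos haA] at this

lemma prob_partition (P : Measure Ω) (hTmeas : ∀ j, Measurable (T j))
    {E : Set Ω} (hE : MeasurableSet E) (n : ℕ) :
    P E = ∑ A ∈ (Finset.Icc 1 n).powerset, P (E ∩ patE T n A) := by
  classical
  have hcover : E = ⋃ A ∈ (Finset.Icc 1 n).powerset, E ∩ patE T n A := by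
    ext ω
    simp only [Set.mem_iUnion, Set.mem_inter_iff, exists_prop]
    constructor
    · intro h
      exact ⟨patOf T n ω, patOf_mem_powerset n ω, h, mem_patE_patOf n ω⟩
    · rintro ⟨A, -, h, -⟩; exact h
  conv_lhs => rw [hcover]
  rw [measure_biUnion_finset]
  · intro A hA A' hA' hne
    simp only [Function.onFun]
    rw [Set.disjoint_left]
    rintro ω ⟨-, h1⟩ ⟨-, h2⟩
    exact hne (by
      rw [← patOf_eq_of_mem_patE (Finset.mem_powerset.1 hA) h1,
        patOf_eq_of_mem_patE (Finset.mem_powerset.1 hA') h2])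
  · exact fun A _ => hE.inter (measurableSet_patE hTmeas n A)

lemma map_singleR (P : Measure Ω) (hRmeas : ∀ i, Measurable (R i))
    (hRident : ∀ i, Measure.map (R i) P = Measure.map (R 0) P) (i : ℕ) (s : Set ℕ) :
    P {ω | R i ω ∈ s} = P {ω | R 0 ω ∈ s} := by
  have hs : MeasurableSet s := .of_discrete
  have h1 : {ω | R i ω ∈ s} = R i ⁻¹' s := rfl
  have h2 : {ω | R 0 ω ∈ s} = R 0 ⁻¹' s := rfl
  rw [h1, h2, ← Measure.map_apply (hRmeas i) hs, hRident i, Measure.map_apply (hRmeas 0) hs]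

lemma measurableSet_XiSet (n : ℕ) (A : Finset ℕ) :
    MeasurableSet {f : ℕ → ℕ∞ | ∀ i ∈ Finset.Icc 1 n, Xi i f = (if i ∈ A then 1 else 0)} := by
  have h1 : ∀ i : ℕ, MeasurableSet {f : ℕ → ℕ∞ | Xi i f = 1} := by
    intro i
    have : {f : ℕ → ℕ∞ | Xi i f = 1} =
        ⋃ j : ℕ, {f : ℕ → ℕ∞ | (∑ l ∈ Finset.range j, f l) = (i : ℕ∞)} := by
      ext f
      simp only [Set.mem_setOf_eq, Set.mem_iUnion]
      unfold Xi psum; split <;> simp_all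
    rw [this]
    refine MeasurableSet.iUnion fun j => ?_
    have hsum : Measurable (fun f : ℕ → ℕ∞ => ∑ l ∈ Finset.range j, f l) :=
      Finset.measurable_sum _ (fun l _ => measurable_pi_apply l)
    exact hsum (measurableSet_singleton _)
  have : {f : ℕ → ℕ∞ | ∀ i ∈ Finset.Icc 1 n, Xi i f = (if i ∈ A then 1 else 0)} =
      ⋂ i ∈ Finset.Icc 1 n, {f : ℕ → ℕ∞ | Xi i f = (if i ∈ A then 1 else 0)} := by
    ext f; simp
  rw [this]
  refine MeasurableSet.biInter (Finset.Icc 1 n).countable_toSet (fun i _ => ?_)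
  by_cases hiA : i ∈ A
  · rw [if_pos hiA]; exact h1 i
  · rw [if_neg hiA]
    have : {f : ℕ → ℕ∞ | Xi i f = 0} = {f : ℕ → ℕ∞ | Xi i f = 1}ᶜ := by
      ext f
      have : Xi i f = 0 ∨ Xi i f = 1 := by unfold Xi; split <;> simp
      rcases this with h | h <;> simp [h]
    rw [this]; exact (h1 i).compl

lemma core1 (P : Measure Ω) [IsProbabilityMeasure P]
    (hTmeas : ∀ j, Measurable (T j)) (hRmeas : ∀ i, Measurable (R i))
    (hRindep : iIndepFun R P)
    (hRident : ∀ i, Measure.map (R i) P = Measure.map (R 0) P)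
    (hTR : IndepFun (fun ω => fun j => T j ω) (fun ω => fun i => R i ω) P)
    (n : ℕ) (V : ℕ → ℕ → Set ℕ) :
    P {ω | ∀ i ∈ Finset.Icc 1 n, R i ω ∈ V i (xi T i ω)} =
      ∑ A ∈ (Finset.Icc 1 n).powerset,
        (∏ i ∈ Finset.Icc 1 n, P {ω | R 0 ω ∈ V i (if i ∈ A then 1 else 0)}) *
          P (patE T n A) := by
  classical
  have hE : MeasurableSet {ω : Ω | ∀ i ∈ Finset.Icc 1 n, R i ω ∈ V i (xi T i ω)} := by
    have : {ω : Ω | ∀ i ∈ Finset.Icc 1 n, R i ω ∈ V i (xi T i ω)} =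
        ⋂ i ∈ Finset.Icc 1 n,
          ({ω | xi T i ω = 1} ∩ R i ⁻¹' (V i 1) ∪ {ω | xi T i ω = 0} ∩ R i ⁻¹' (V i 0)) := by
      ext ω
      simp only [Set.mem_setOf_eq, Set.mem_iInter, Set.mem_union, Set.mem_inter_iff,
        Set.mem_preimage]
      constructor
      · intro h i hi
        rcases xi_cases T i ω with hx | hx
        · right; exact ⟨hx, by have := h i hi; rwa [hx] at this⟩
        · left; exact ⟨hx, by have := h i hi; rwa [hx] at this⟩
      · intro h i hi
        rcases h i hi with ⟨hx, hr⟩ | ⟨hx, hr⟩ <;> rw [hx] <;> exact hr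
    rw [this]
    refine MeasurableSet.biInter (Finset.Icc 1 n).countable_toSet (fun i _ => ?_)
    exact ((measurableSet_xi hTmeas i 1).inter ((hRmeas i) .of_discrete)).union
      ((measurableSet_xi hTmeas i 0).inter ((hRmeas i) .of_discrete))
  rw [prob_partition P hTmeas hE n]
  refine Finset.sum_congr rfl fun A hA => ?_
  have hAs : A ⊆ Finset.Icc 1 n := Finset.mem_powerset.1 hA
  have hstep1 : {ω : Ω | ∀ i ∈ Finset.Icc 1 n, R i ω ∈ V i (xi T i ω)} ∩ patE T n A =
      (⋂ i ∈ Finset.Icc 1 n, R i ⁻¹' (V i (if i ∈ A then 1 else 0))) ∩ patE T n A := by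
    ext ω
    simp only [Set.mem_inter_iff, Set.mem_setOf_eq, Set.mem_iInter, Set.mem_preimage]
    constructor
    · rintro ⟨h1, h2⟩
      exact ⟨fun i hi => by rw [← h2 i hi]; exact h1 i hi, h2⟩
    · rintro ⟨h1, h2⟩
      exact ⟨fun i hi => by rw [h2 i hi]; exact h1 i hi, h2⟩
  rw [hstep1]
  have hstep2 : P ((⋂ i ∈ Finset.Icc 1 n, R i ⁻¹' (V i (if i ∈ A then 1 else 0))) ∩ patE T n A)
      = P (⋂ i ∈ Finset.Icc 1 n, R i ⁻¹' (V i (if i ∈ A then 1 else 0))) * P (patE T n A) := by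
    have hpre1 : patE T n A = (fun ω => fun j => T j ω) ⁻¹'
        {f : ℕ → ℕ∞ | ∀ i ∈ Finset.Icc 1 n, Xi i f = (if i ∈ A then 1 else 0)} := rfl
    have hpre2 : (⋂ i ∈ Finset.Icc 1 n, R i ⁻¹' (V i (if i ∈ A then 1 else 0))) =
        (fun ω => fun i => R i ω) ⁻¹'
          {g : ℕ → ℕ | ∀ i ∈ Finset.Icc 1 n, g i ∈ V i (if i ∈ A then 1 else 0)} := by
      ext ω; simp [Set.mem_iInter]
    have hmg : MeasurableSet {g : ℕ → ℕ | ∀ i ∈ Finset.Icc 1 n, g i ∈ V i (if i ∈ A then 1 else 0)} := by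
      have : {g : ℕ → ℕ | ∀ i ∈ Finset.Icc 1 n, g i ∈ V i (if i ∈ A then 1 else 0)} =
          ⋂ i ∈ Finset.Icc 1 n, (fun g : ℕ → ℕ => g i) ⁻¹' (V i (if i ∈ A then 1 else 0)) := by
        ext g; simp
      rw [this]
      exact MeasurableSet.biInter (Finset.Icc 1 n).countable_toSet
        (fun i _ => (measurable_pi_apply i) .of_discrete)
    rw [hpre1, hpre2, Set.inter_comm,
      hTR.measure_inter_preimage_eq_mul _ _ (measurableSet_XiSet n A) hmg, mul_comm]
  rw [hstep2]
  congr 1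
  rw [hRindep.measure_inter_preimage_eq_mul (S := Finset.Icc 1 n)
    (sets := fun i => V i (if i ∈ A then 1 else 0)) (fun i _ => .of_discrete)]
  exact Finset.prod_congr rfl fun i _ => map_singleR P hRmeas hRident i _

lemma core2 (P : Measure Ω) (hTmeas : ∀ j, Measurable (T j)) (n : ℕ) (w : ℕ → ℕ → ℝ≥0∞) :
    ∫⁻ ω, ∏ i ∈ Finset.Icc 1 n, w i (xi T i ω) ∂P =
      ∑ A ∈ (Finset.Icc 1 n).powerset,
        (∏ i ∈ Finset.Icc 1 n, w i (if i ∈ A then 1 else 0)) * P (patE T n A) := by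
  classical
  have key : ∀ ω, (∏ i ∈ Finset.Icc 1 n, w i (xi T i ω)) =
      ∑ A ∈ (Finset.Icc 1 n).powerset,
        (patE T n A).indicator (fun _ => ∏ i ∈ Finset.Icc 1 n, w i (if i ∈ A then 1 else 0)) ω := by
    intro ω
    rw [Finset.sum_eq_single (patOf T n ω)]
    · rw [Set.indicator_of_mem (mem_patE_patOf n ω)]
      refine Finset.prod_congr rfl fun i hi => ?_
      congr 1
      have hmp : i ∈ patOf T n ω ↔ i ∈ Finset.Icc 1 n ∧ xi T i ω = 1 := Finset.mem_filter
      rcases xi_cases T i ω with h | h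
      · rw [h, if_neg (fun hmem => by
          have h1 := (hmp.1 hmem).2
          rw [h] at h1; exact one_ne_zero h1.symm)]
      · rw [h, if_pos (hmp.2 ⟨hi, h⟩)]
    · intro A hA hne
      rw [Set.indicator_of_notMem]
      intro hmem
      exact hne (patOf_eq_of_mem_patE (Finset.mem_powerset.1 hA) hmem).symm
    · intro h
      exact absurd (patOf_mem_powerset n ω) h
  calc ∫⁻ ω, ∏ i ∈ Finset.Icc 1 n, w i (xi T i ω) ∂P
      = ∫⁻ ω, ∑ A ∈ (Finset.Icc 1 n).powerset,
          (patE T n A).indicator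
            (fun _ => ∏ i ∈ Finset.Icc 1 n, w i (if i ∈ A then 1 else 0)) ω ∂P := by
        exact lintegral_congr key
    _ = ∑ A ∈ (Finset.Icc 1 n).powerset,
          ∫⁻ ω, (patE T n A).indicator
            (fun _ => ∏ i ∈ Finset.Icc 1 n, w i (if i ∈ A then 1 else 0)) ω ∂P := by
        refine lintegral_finset_sum _ fun A _ => ?_
        exact (measurable_const.indicator (measurableSet_patE hTmeas n A))
    _ = ∑ A ∈ (Finset.Icc 1 n).powerset,
          (∏ i ∈ Finset.Icc 1 n, w i (if i ∈ A then 1 else 0)) * P (patE T n A) := by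
        refine Finset.sum_congr rfl fun A _ => ?_
        rw [lintegral_indicator_const (measurableSet_patE hTmeas n A)]

/-! ### Dual process -/

lemma enat_sInf_mem {s : Set ℕ∞} (hs : s.Nonempty) : sInf s ∈ s := by
  obtain ⟨m, hm, hmin⟩ := (wellFounded_lt (α := ℕ∞)).has_min s hs
  have : sInf s = m := le_antisymm (sInf_le hm) (le_sInf fun x hx => not_lt.1 (hmin x hx))
  rw [this]; exact hm

lemma Ydual_eq_one_iff {i : ℕ} {ω : Ω} :
    Ydual T R i ω = 1 ↔ ∃ n, i ∈ Bset T R n ω := by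
  unfold Ydual; split <;> simp_all

lemma Ydual_zero (ω : Ω) : Ydual T R 0 ω = 1 :=
  Ydual_eq_one_iff.2 ⟨0, by simp [Bset]⟩

lemma Ydual_succ {i : ℕ} {ω : Ω} :
    Ydual T R (i + 1) ω = 1 ↔
      (xi T (i + 1) ω = 1 ∧
        ∃ j, j < i + 1 ∧ Ydual T R j ω = 1 ∧ i + 1 ≤ j + R (i + 1) ω) := by
  rw [Ydual_eq_one_iff]
  constructor
  · rintro ⟨n, hn⟩
    rcases n with _ | m
    · simp only [Bset, Set.mem_singleton_iff] at hn
      omega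
    · simp only [Bset, Set.mem_setOf_eq] at hn
      obtain ⟨hxi, ⟨j, hj⟩, -⟩ := hn
      obtain ⟨hj1, hj2⟩ := hj
      obtain ⟨hjle, hjlt⟩ := Set.mem_Ico.1 hj1
      exact ⟨hxi, j, hjlt, Ydual_eq_one_iff.2 ⟨m, hj2⟩, by omega⟩
  · rintro ⟨hxi, j, hjlt, hYd, hle⟩
    obtain ⟨n, hn⟩ := Ydual_eq_one_iff.1 hYd
    by_cases hex : ∃ m, i + 1 ∈ Bset T R m ω
    · exact hex
    · push_neg at hex
      refine absurd ⟨n + 1, ?_⟩ (not_exists.2 hex)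
      show (i + 1) ∈ Bset T R (n + 1) ω
      simp only [Bset, Set.mem_setOf_eq]
      exact ⟨hxi, ⟨j, Set.mem_inter (Set.mem_Ico.2 ⟨by omega, hjlt⟩) hn⟩, fun m _ => hex m⟩

/-! ### Block structure -/

def sl (t : ℕ → ℕ) (l : ℕ) : ℕ := ∑ l' ∈ Finset.range l, t l'

def bIdx (t : ℕ → ℕ) (m i : ℕ) : ℕ := Nat.findGreatest (fun l => sl t l < i) m

lemma sl_zero (t : ℕ → ℕ) : sl t 0 = 0 := by simp [sl]

lemma sl_succ (t : ℕ → ℕ) (l : ℕ) : sl t (l + 1) = sl t l + t l := by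
  simp [sl, Finset.sum_range_succ]

lemma sl_mono (t : ℕ → ℕ) {l l' : ℕ} (h : l ≤ l') : sl t l ≤ sl t l' :=
  Finset.sum_le_sum_of_subset (Finset.range_subset_range.2 h)

lemma sl_strict {t : ℕ → ℕ} {m l l' : ℕ} (hpos : ∀ l < m, 1 ≤ t l)
    (h : l < l') (h' : l' ≤ m) : sl t l < sl t l' := by
  have h1 : sl t (l + 1) ≤ sl t l' := sl_mono t h
  rw [sl_succ] at h1
  have := hpos l (by omega)
  omega

lemma bIdx_spec {t : ℕ → ℕ} {m i : ℕ} (hpos : ∀ l < m, 1 ≤ t l)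
    (h1 : 1 ≤ i) (h2 : i ≤ sl t m) :
    bIdx t m i < m ∧ sl t (bIdx t m i) < i ∧ i ≤ sl t (bIdx t m i + 1) := by
  classical
  have hP0 : sl t 0 < i := by rw [sl_zero]; omega
  have hspec : sl t (bIdx t m i) < i :=
    Nat.findGreatest_spec (P := fun l => sl t l < i) (Nat.zero_le m) hP0
  have hle : bIdx t m i ≤ m := Nat.findGreatest_le m
  have hltm : bIdx t m i < m := by
    rcases eq_or_lt_of_le hle with heq | h
    · exfalso; rw [heq] at hspec; omega
    · exact h
  have hup : i ≤ sl t (bIdx t m i + 1) := by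
    by_contra hcon
    push_neg at hcon
    have h5 := Nat.le_findGreatest (P := fun l => sl t l < i) (by omega : bIdx t m i + 1 ≤ m) hcon
    have hfg : Nat.findGreatest (fun l => sl t l < i) m = bIdx t m i := rfl
    omega
  exact ⟨hltm, hspec, hup⟩

lemma bIdx_eq {t : ℕ → ℕ} {m l j : ℕ} (hpos : ∀ l < m, 1 ≤ t l)
    (hl : l < m) (hj1 : 1 ≤ j) (hjt : j ≤ t l) :
    bIdx t m (sl t l + j) = l := by
  classical
  rw [bIdx, Nat.findGreatest_eq_iff]
  refine ⟨by omega, fun _ => by omega, fun nn hn1 hn2 => ?_⟩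
  have : sl t (l + 1) ≤ sl t nn := sl_mono t (by omega)
  rw [sl_succ] at this
  omega

def MEset (T : ℕ → Ω → ℕ∞) (R : ℕ → Ω → ℕ) (t : ℕ → ℕ) (m : ℕ) : Set Ω :=
  {ω | ∀ l < m, ∀ j, 1 ≤ j → j ≤ t l →
    ((xi T (sl t l + j) ω = 1 ∧ j ≤ R (sl t l + j) ω) ↔ j = t l)}

lemma point_char {t : ℕ → ℕ} {m : ℕ} (hpos : ∀ l < m, 1 ≤ t l) {ω : Ω} {i : ℕ}
    (h1 : 1 ≤ i) (him : i ≤ sl t m)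
    (hbelow : ∀ j < i, (Ydual T R j ω = 1 ↔ j = 0 ∨ ∃ l, 1 ≤ l ∧ l ≤ m ∧ j = sl t l)) :
    (Ydual T R i ω = 1) ↔ (xi T i ω = 1 ∧ i - sl t (bIdx t m i) ≤ R i ω) := by
  obtain ⟨hbm, hblt, hbub⟩ := bIdx_spec hpos h1 him
  obtain ⟨i', rfl⟩ := Nat.exists_eq_succ_of_ne_zero (by omega : i ≠ 0)
  rw [Nat.succ_eq_add_one] at *
  rw [Ydual_succ]
  constructor
  · rintro ⟨hxi, j, hjlt, hYd, hle⟩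
    refine ⟨hxi, ?_⟩
    have hj := (hbelow j hjlt).1 hYd
    have hjle : j ≤ sl t (bIdx t m (i' + 1)) := by
      rcases hj with rfl | ⟨l', hl'1, hl'm, rfl⟩
      · omega
      · have : l' ≤ bIdx t m (i' + 1) := by
          by_contra hcon
          push_neg at hcon
          have := Nat.le_findGreatest (P := fun l => sl t l < i' + 1) hl'm hjlt
          have hfg : Nat.findGreatest (fun l => sl t l < i' + 1) m = bIdx t m (i' + 1) := rfl
          omega
        exact sl_mono t this
    omega
  · rintro ⟨hxi, hle⟩
    refine ⟨hxi, sl t (bIdx t m (i' + 1)), hblt, ?_, by omega⟩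
    rw [hbelow _ hblt]
    rcases Nat.eq_zero_or_pos (bIdx t m (i' + 1)) with hb0 | hbpos
    · left; rw [hb0, sl_zero]
    · right; exact ⟨bIdx t m (i' + 1), hbpos, by omega, rfl⟩

lemma informed_of_MEset {t : ℕ → ℕ} {m : ℕ} (hpos : ∀ l < m, 1 ≤ t l) {ω : Ω}
    (hME : ω ∈ MEset T R t m) :
    ∀ i ≤ sl t m, (Ydual T R i ω = 1 ↔ i = 0 ∨ ∃ l, 1 ≤ l ∧ l ≤ m ∧ i = sl t l) := by
  intro i
  induction i using Nat.strong_induction_on with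
  | _ i IH =>
    intro him
    rcases Nat.eq_zero_or_pos i with rfl | hipos
    · simp [Ydual_zero]
    · have hbelow : ∀ j < i, (Ydual T R j ω = 1 ↔ j = 0 ∨ ∃ l, 1 ≤ l ∧ l ≤ m ∧ j = sl t l) :=
        fun j hj => IH j hj (by omega)
      rw [point_char hpos hipos him hbelow]
      obtain ⟨hbm, hblt, hbub⟩ := bIdx_spec hpos hipos him
      set l := bIdx t m i with hl
      have hslsucc : sl t (l + 1) = sl t l + t l := sl_succ t l
      have hME' := hME l hbm (i - sl t l) (by omega) (by omega)
      rw [show sl t l + (i - sl t l) = i by omega] at hME'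
      rw [show (i - sl t l ≤ R i ω) = (i - sl t l ≤ R i ω) from rfl]
      constructor
      · rintro ⟨hxi, hr⟩
        have : i - sl t l = t l := hME'.1 ⟨hxi, hr⟩
        right
        exact ⟨l + 1, by omega, by omega, by omega⟩
      · rintro (rfl | ⟨l', hl'1, hl'm, rfl⟩)
        · omega
        · have hbeq : bIdx t m (sl t l') = l' - 1 := by
            have := bIdx_eq hpos (show l' - 1 < m by omega) (hpos (l' - 1) (by omega))
              (le_refl (t (l' - 1)))
            rwa [← sl_succ, show l' - 1 + 1 = l' by omega] at this
          have hleq : l = l' - 1 := by rw [← hbeq, hl]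
          have hslt : sl t l' = sl t l + t l := by
            rw [hleq, ← sl_succ, show l' - 1 + 1 = l' by omega]
          have := hME'.2 (by omega)
          rw [show sl t l' - sl t l = t l by omega] at this ⊢
          exact this

lemma MEset_of_informed {t : ℕ → ℕ} {m : ℕ} (hpos : ∀ l < m, 1 ≤ t l) {ω : Ω}
    (hIN : ∀ i ≤ sl t m, (Ydual T R i ω = 1 ↔ i = 0 ∨ ∃ l, 1 ≤ l ∧ l ≤ m ∧ i = sl t l)) :
    ω ∈ MEset T R t m := by
  intro l hl j hj1 hjt
  set i := sl t l + j with hi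
  have hi1 : 1 ≤ i := by omega
  have him : i ≤ sl t m := by
    have h1 : sl t (l + 1) ≤ sl t m := sl_mono t (by omega)
    rw [sl_succ] at h1
    omega
  have hbeq : bIdx t m i = l := bIdx_eq hpos hl hj1 hjt
  have hpt := point_char hpos hi1 him (fun j' hj' => hIN j' (by omega))
  rw [hbeq, show i - sl t l = j by omega] at hpt
  rw [← hpt, hIN i him]
  constructor
  · rintro (h0 | ⟨l', hl'1, hl'm, hil'⟩)
    · omega
    · -- i = sl t l', with sl t l < i ≤ sl t (l+1)
      have hgt : l < l' := by
        by_contra hcon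
        push_neg at hcon
        have := sl_mono t hcon
        omega
      have h2 : sl t (l + 1) ≤ sl t l' := sl_mono t (by omega)
      rw [sl_succ] at h2
      omega
  · rintro rfl
    right
    exact ⟨l + 1, by omega, by omega, by rw [sl_succ]⟩

lemma renewalY_eq {t : ℕ → ℕ} {m : ℕ} (hpos : ∀ l < m, 1 ≤ t l) {ω : Ω}
    (hIN : ∀ i ≤ sl t m, (Ydual T R i ω = 1 ↔ i = 0 ∨ ∃ l, 1 ≤ l ∧ l ≤ m ∧ i = sl t l)) :
    ∀ l ≤ m, renewalY T R l ω = (sl t l : ℕ∞) := by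
  intro l
  induction l with
  | zero => intro _; simp [renewalY, sl_zero]
  | succ l IH =>
    intro hlm
    have hIHl := IH (by omega)
    show sInf {x : ℕ∞ | renewalY T R l ω < x ∧ ∃ i : ℕ, x = (i : ℕ∞) ∧ Ydual T R i ω = 1} = _
    rw [hIHl]
    apply le_antisymm
    · apply sInf_le
      refine ⟨by exact_mod_cast sl_strict hpos (by omega) hlm, sl t (l + 1), rfl, ?_⟩
      exact (hIN (sl t (l + 1)) (sl_mono t hlm)).2 (Or.inr ⟨l + 1, by omega, hlm, rfl⟩)
    · apply le_sInf
      rintro x ⟨hlt, i, rfl, hYd⟩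
      have hilt : sl t l < i := by exact_mod_cast hlt
      rcases le_or_gt i (sl t m) with him | him
      · rcases (hIN i him).1 hYd with rfl | ⟨l', hl'1, hl'm, rfl⟩
        · omega
        · have : l < l' := by
            by_contra hcon
            push_neg at hcon
            have := sl_mono t hcon
            omega
          exact_mod_cast sl_mono t (by omega : l + 1 ≤ l')
      · have : sl t (l + 1) ≤ sl t m := sl_mono t hlm
        exact_mod_cast by omega
    
lemma gap_eq_of_informed {t : ℕ → ℕ} {m : ℕ} (hpos : ∀ l < m, 1 ≤ t l) {ω : Ω}
    (hIN : ∀ i ≤ sl t m, (Ydual T R i ω = 1 ↔ i = 0 ∨ ∃ l, 1 ≤ l ∧ l ≤ m ∧ i = sl t l)) :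
    ∀ l < m, gapY T R l ω = (t l : ℕ∞) := by
  intro l hl
  unfold gapY
  rw [renewalY_eq hpos hIN l (by omega), renewalY_eq hpos hIN (l + 1) (by omega),
    ← ENat.coe_sub]
  have hsub : sl t (l + 1) - sl t l = t l := by rw [sl_succ]; omega
  rw [hsub]

lemma informed_of_gaps {t : ℕ → ℕ} {m : ℕ} (hpos : ∀ l < m, 1 ≤ t l) {ω : Ω}
    (hgaps : ∀ l < m, gapY T R l ω = (t l : ℕ∞)) :
    ∀ i ≤ sl t m, (Ydual T R i ω = 1 ↔ i = 0 ∨ ∃ l, 1 ≤ l ∧ l ≤ m ∧ i = sl t l) := by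
  -- first, compute renewalY and no-informed-between
  have hren : ∀ l ≤ m, renewalY T R l ω = (sl t l : ℕ∞) := by
    intro l
    induction l with
    | zero => intro _; simp [renewalY, sl_zero]
    | succ l IH =>
      intro hlm
      have hIHl := IH (by omega)
      have hgap := hgaps l (by omega)
      unfold gapY at hgap
      rw [hIHl] at hgap
      set S := {x : ℕ∞ | renewalY T R l ω < x ∧ ∃ i : ℕ, x = (i : ℕ∞) ∧ Ydual T R i ω = 1}
        with hS
      have hrsucc : renewalY T R (l + 1) ω = sInf S := rfl
      rcases Set.eq_empty_or_nonempty S with hSe | hSne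
      · exfalso
        rw [hrsucc, hSe, sInf_empty] at hgap
        rw [show (⊤ : ℕ∞) - (sl t l : ℕ∞) = ⊤ from ENat.top_sub_coe _] at hgap
        exact (ENat.coe_ne_top (t l)) hgap.symm
      · have hmem := enat_sInf_mem hSne
        rw [← hrsucc] at hmem
        obtain ⟨hltx, i, hxi, hYd⟩ := hmem
        rw [hIHl] at hltx
        rw [hxi] at hltx hgap ⊢
        have hige : sl t l ≤ i := by
          have h9 : (sl t l : ℕ∞) < (i : ℕ∞) := hltx
          exact_mod_cast h9.le
        rw [← ENat.coe_sub] at hgap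
        have h8 : i - sl t l = t l := by exact_mod_cast hgap
        have h7 : i = sl t (l + 1) := by rw [sl_succ]; omega
        exact_mod_cast congrArg (Nat.cast : ℕ → ℕ∞) h7
  have hnob : ∀ l < m, ∀ i, sl t l < i → i < sl t (l + 1) → Ydual T R i ω ≠ 1 := by
    intro l hl i hi1 hi2 hYd
    have h1 := hren l (by omega)
    have h2 := hren (l + 1) (by omega)
    have hmemS : (i : ℕ∞) ∈ {x : ℕ∞ | renewalY T R l ω < x ∧
        ∃ i' : ℕ, x = (i' : ℕ∞) ∧ Ydual T R i' ω = 1} := by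
      refine ⟨by rw [h1]; exact_mod_cast hi1, i, rfl, hYd⟩
    have : renewalY T R (l + 1) ω ≤ (i : ℕ∞) := sInf_le hmemS
    rw [h2] at this
    have : sl t (l + 1) ≤ i := by exact_mod_cast this
    omega
  intro i him
  constructor
  · intro hYd
    rcases Nat.eq_zero_or_pos i with rfl | hipos
    · left; rfl
    · right
      obtain ⟨hbm, hblt, hbub⟩ := bIdx_spec hpos hipos him
      rcases eq_or_lt_of_le hbub with heq | hlt
      · exact ⟨bIdx t m i + 1, by omega, by omega, heq⟩
      · exact absurd hYd (hnob _ hbm i hblt hlt)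
  · rintro (rfl | ⟨l, hl1, hlm, rfl⟩)
    · exact Ydual_zero ω
    · have h2 := hren l hlm
      set S := {x : ℕ∞ | renewalY T R (l - 1) ω < x ∧
        ∃ i : ℕ, x = (i : ℕ∞) ∧ Ydual T R i ω = 1} with hS
      have hrsucc : renewalY T R l ω = sInf S := by
        conv_lhs => rw [show l = (l - 1) + 1 by omega]
        rfl
      have hSne : S.Nonempty := by
        by_contra hcon
        rw [Set.not_nonempty_iff_eq_empty] at hcon
        rw [hrsucc, hcon, sInf_empty] at h2
        exact (ENat.coe_ne_top (sl t l)) h2.symm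
      have hmem := enat_sInf_mem hSne
      rw [← hrsucc, h2] at hmem
      obtain ⟨-, i', hxi', hYd'⟩ := hmem
      have : i' = sl t l := by exact_mod_cast hxi'.symm
      rwa [this] at hYd'

lemma gaps_event_eq (t : ℕ → ℕ) (m : ℕ) (hpos : ∀ l < m, 1 ≤ t l) :
    {ω : Ω | ∀ l < m, gapY T R l ω = (t l : ℕ∞)} = MEset T R t m := by
  ext ω
  constructor
  · intro h
    exact MEset_of_informed hpos (informed_of_gaps hpos h)
  · intro h l hl
    exact gap_eq_of_informed hpos (informed_of_MEset hpos h) l hl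

/-! ### Weighted sums over patterns and the splitting lemma -/

def WS (P : Measure Ω) (T : ℕ → Ω → ℕ∞) (R : ℕ → Ω → ℕ) (n : ℕ) (V : ℕ → ℕ → Set ℕ) : ℝ≥0∞ :=
  ∑ A ∈ (Finset.Icc 1 n).powerset,
    (∏ i ∈ Finset.Icc 1 n, P {ω | R 0 ω ∈ V i (if i ∈ A then 1 else 0)}) * P (patE T n A)

lemma core1' (P : Measure Ω) [IsProbabilityMeasure P]
    (hTmeas : ∀ j, Measurable (T j)) (hRmeas : ∀ i, Measurable (R i))
    (hRindep : iIndepFun R P)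
    (hRident : ∀ i, Measure.map (R i) P = Measure.map (R 0) P)
    (hTR : IndepFun (fun ω => fun j => T j ω) (fun ω => fun i => R i ω) P)
    (n : ℕ) (V : ℕ → ℕ → Set ℕ) :
    P {ω | ∀ i ∈ Finset.Icc 1 n, R i ω ∈ V i (xi T i ω)} = WS P T R n V :=
  core1 P hTmeas hRmeas hRindep hRident hTR n V

lemma WS_congr (P : Measure Ω) {n : ℕ} {V V' : ℕ → ℕ → Set ℕ}
    (h : ∀ i ∈ Finset.Icc 1 n, ∀ b, V i b = V' i b) :
    WS P T R n V = WS P T R n V' := by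
  unfold WS
  refine Finset.sum_congr rfl fun A _ => ?_
  congr 1
  exact Finset.prod_congr rfl fun i hi => by rw [h i hi]

lemma WS_split (P : Measure Ω) [IsProbabilityMeasure P] (hT1 : ∀ j ω, 1 ≤ T j ω)
    (hTmeas : ∀ j, Measurable (T j))
    (hTindep : iIndepFun T P)
    (hTident : ∀ j, Measure.map (T j) P = Measure.map (T 0) P)
    {k n : ℕ} (hk : 1 ≤ k) (V : ℕ → ℕ → Set ℕ) (hVk : V k 0 = ∅) :
    WS P T R (k + n) V = WS P T R k V * WS P T R n (fun j => V (k + j)) := by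
  classical
  unfold WS
  rw [Finset.sum_mul_sum]
  rw [← Finset.sum_product']
  refine Finset.sum_nbij'
    (i := fun C => (C.filter (· ≤ k), (C.filter (fun x => k < x)).image (· - k)))
    (j := fun q => q.1 ∪ q.2.image (· + k)) ?_ ?_ ?_ ?_ ?_
  · intro C hC
    have hCs := Finset.mem_powerset.1 hC
    refine Finset.mem_product.2 ⟨Finset.mem_powerset.2 ?_, Finset.mem_powerset.2 ?_⟩
    · intro c hc
      obtain ⟨hcC, hck⟩ := Finset.mem_filter.1 hc
      have := Finset.mem_Icc.1 (hCs hcC)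
      exact Finset.mem_Icc.2 ⟨by omega, hck⟩
    · intro c hc
      obtain ⟨x, hx, rfl⟩ := Finset.mem_image.1 hc
      obtain ⟨hxC, hxk⟩ := Finset.mem_filter.1 hx
      have := Finset.mem_Icc.1 (hCs hxC)
      exact Finset.mem_Icc.2 ⟨by omega, by omega⟩
  · intro q hq
    obtain ⟨hq1, hq2⟩ := Finset.mem_product.1 hq
    have hq1s := Finset.mem_powerset.1 hq1
    have hq2s := Finset.mem_powerset.1 hq2
    refine Finset.mem_powerset.2 fun c hc => ?_
    rcases Finset.mem_union.1 hc with h | h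
    · have := Finset.mem_Icc.1 (hq1s h)
      exact Finset.mem_Icc.2 ⟨by omega, by omega⟩
    · obtain ⟨b, hb, rfl⟩ := Finset.mem_image.1 h
      have := Finset.mem_Icc.1 (hq2s hb)
      exact Finset.mem_Icc.2 ⟨by omega, by omega⟩
  · intro C hC
    ext c
    simp only [Finset.mem_union, Finset.mem_filter, Finset.mem_image]
    constructor
    · rintro (⟨h1, -⟩ | ⟨x, ⟨y, ⟨hyC, hyk⟩, rfl⟩, rfl⟩)
      · exact h1
      · rwa [show y - k + k = y by omega]
    · intro hc
      rcases le_or_gt c k with h | h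
      · exact Or.inl ⟨hc, h⟩
      · exact Or.inr ⟨c - k, ⟨c, ⟨hc, h⟩, rfl⟩, by omega⟩
  · intro q hq
    obtain ⟨hq1, hq2⟩ := Finset.mem_product.1 hq
    have hq1s := Finset.mem_powerset.1 hq1
    have hq2s := Finset.mem_powerset.1 hq2
    have hfst : ((q.1 ∪ q.2.image (· + k)).filter (· ≤ k)) = q.1 := by
      ext c
      simp only [Finset.mem_filter, Finset.mem_union, Finset.mem_image]
      constructor
      · rintro ⟨h | ⟨b, hb, rfl⟩, hck⟩
        · exact h
        · have := Finset.mem_Icc.1 (hq2s hb); omega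
      · intro h
        have := Finset.mem_Icc.1 (hq1s h)
        exact ⟨Or.inl h, by omega⟩
    have hsnd : (((q.1 ∪ q.2.image (· + k)).filter (fun x => k < x)).image (· - k)) = q.2 := by
      ext c
      simp only [Finset.mem_image, Finset.mem_filter, Finset.mem_union]
      constructor
      · rintro ⟨x, ⟨h | ⟨b, hb, rfl⟩, hxk⟩, rfl⟩
        · have := Finset.mem_Icc.1 (hq1s h); omega
        · rwa [show b + k - k = b by omega]
      · intro h
        have := Finset.mem_Icc.1 (hq2s h)
        exact ⟨c + k, ⟨Or.inr ⟨c, h, rfl⟩, by omega⟩, by omega⟩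
    exact Prod.ext hfst hsnd
  · intro C hC
    have hCs := Finset.mem_powerset.1 hC
    set A := C.filter (· ≤ k) with hA
    set B := (C.filter (fun x => k < x)).image (· - k) with hB
    have hAs : A ⊆ Finset.Icc 1 k := by
      intro c hc
      obtain ⟨hcC, hck⟩ := Finset.mem_filter.1 hc
      have := Finset.mem_Icc.1 (hCs hcC)
      exact Finset.mem_Icc.2 ⟨by omega, hck⟩
    have hBs : B ⊆ Finset.Icc 1 n := by
      intro c hc
      obtain ⟨x, hx, rfl⟩ := Finset.mem_image.1 hc
      obtain ⟨hxC, hxk⟩ := Finset.mem_filter.1 hx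
      have := Finset.mem_Icc.1 (hCs hxC)
      exact Finset.mem_Icc.2 ⟨by omega, by omega⟩
    -- membership translations
    have hmemA : ∀ i, i ≤ k → (i ∈ A ↔ i ∈ C) := by
      intro i hik
      rw [hA, Finset.mem_filter]
      exact ⟨fun h => h.1, fun h => ⟨h, hik⟩⟩
    have hmemB : ∀ j, 1 ≤ j → (j ∈ B ↔ k + j ∈ C) := by
      intro j hj
      rw [hB]
      simp only [Finset.mem_image, Finset.mem_filter]
      constructor
      · rintro ⟨x, ⟨hxC, hxk⟩, rfl⟩
        rwa [show k + (x - k) = x by omega]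
      · intro h
        exact ⟨k + j, ⟨h, by omega⟩, by omega⟩
    -- split the product
    have hprod : (∏ i ∈ Finset.Icc 1 (k + n), P {ω | R 0 ω ∈ V i (if i ∈ C then 1 else 0)}) =
        (∏ i ∈ Finset.Icc 1 k, P {ω | R 0 ω ∈ V i (if i ∈ A then 1 else 0)}) *
          ∏ j ∈ Finset.Icc 1 n, P {ω | R 0 ω ∈ V (k + j) (if j ∈ B then 1 else 0)} := by
      have hIoc1 : Finset.Icc 1 (k + n) = Finset.Ioc 0 (k + n) := by ext x; simp; omega
      have hIoc2 : Finset.Icc 1 k = Finset.Ioc 0 k := by ext x; simp; omega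
      have hIoc3 : Finset.Icc 1 n = Finset.Ioc 0 n := by ext x; simp; omega
      rw [hIoc1, hIoc2, hIoc3,
        ← Finset.prod_Ioc_consecutive _ (by omega : 0 ≤ k) (by omega : k ≤ k + n)]
      congr 1
      · refine Finset.prod_congr rfl fun i hi => ?_
        have hik := (Finset.mem_Ioc.1 hi).2
        rw [if_congr (hmemA i hik) rfl rfl]
      · have himg : Finset.Ioc k (k + n) = (Finset.Ioc 0 n).image (k + ·) := by
          ext x
          simp only [Finset.mem_Ioc, Finset.mem_image]
          constructor
          · intro h; exact ⟨x - k, by omega, by omega⟩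
          · rintro ⟨j, hj, rfl⟩; omega
        rw [himg, Finset.prod_image (fun a _ b _ h => by omega)]
        refine Finset.prod_congr rfl fun j hj => ?_
        have hj1 := (Finset.mem_Ioc.1 hj).1
        rw [if_congr (hmemB j hj1).symm rfl rfl]
    -- split the pattern probability
    by_cases hkC : k ∈ C
    · have hkA : k ∈ A := (hmemA k le_rfl).2 hkC
      have hCeq : C = A ∪ B.image (· + k) := by
        ext c
        simp only [Finset.mem_union, Finset.mem_image]
        constructor
        · intro hc
          have h1 := Finset.mem_Icc.1 (hCs hc)
          rcases le_or_gt c k with h | h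
          · exact Or.inl ((hmemA c h).2 hc)
          · exact Or.inr ⟨c - k, (hmemB (c - k) (by omega)).2 (by rwa [show k + (c - k) = c by omega]), by omega⟩
        · rintro (h | ⟨b, hb, rfl⟩)
          · exact (Finset.mem_filter.1 h).1
          · have := (hmemB b (Finset.mem_Icc.1 (hBs hb)).1).1 hb
            rwa [show b + k = k + b by omega]
      have hP : P (patE T (k + n) C) = P (patE T k A) * P (patE T n B) := by
        rw [hCeq, prob_patE P hT1 hTmeas hTindep hTident
            (by rw [← hCeq]; exact hCs),
          pcylP_concat P hT1 hAs hkA hBs,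
          ← prob_patE P hT1 hTmeas hTindep hTident hAs,
          ← prob_patE P hT1 hTmeas hTindep hTident hBs]
      rw [hprod, hP]
      ring
    · -- both sides are zero
      have hkA : k ∉ A := fun h => hkC (Finset.mem_filter.1 h).1
      have hzero : P {ω | R 0 ω ∈ V k (if k ∈ C then 1 else 0)} = 0 := by
        rw [if_neg hkC, hVk]
        simp
      have hzero' : P {ω | R 0 ω ∈ V k (if k ∈ A then 1 else 0)} = 0 := by
        rw [if_neg hkA, hVk]
        simp
      rw [Finset.prod_eq_zero (Finset.mem_Icc.2 ⟨hk, by omega⟩) hzero,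
        Finset.prod_eq_zero (Finset.mem_Icc.2 ⟨hk, le_rfl⟩) hzero']
      ring

/-! ### Probability of MEset -/

def Vme (t : ℕ → ℕ) (m : ℕ) (i : ℕ) (b : ℕ) : Set ℕ :=
  {r | ((b = 1 ∧ i - sl t (bIdx t m i) ≤ r) ↔ i = sl t (bIdx t m i) + t (bIdx t m i))}

lemma MEset_eq_core {t : ℕ → ℕ} {m : ℕ} (hpos : ∀ l < m, 1 ≤ t l) :
    MEset T R t m = {ω : Ω | ∀ i ∈ Finset.Icc 1 (sl t m), R i ω ∈ Vme t m i (xi T i ω)} := by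
  ext ω
  constructor
  · intro h i hi
    obtain ⟨hi1, him⟩ := Finset.mem_Icc.1 hi
    obtain ⟨hbm, hblt, hbub⟩ := bIdx_spec hpos hi1 him
    set l := bIdx t m i
    have hsucc : sl t (l + 1) = sl t l + t l := sl_succ t l
    have hME := h l hbm (i - sl t l) (by omega) (by omega)
    rw [show sl t l + (i - sl t l) = i by omega] at hME
    show ((xi T i ω = 1 ∧ i - sl t l ≤ R i ω) ↔ i = sl t l + t l)
    constructor
    · intro hh
      have := hME.1 hh
      omega
    · intro hh
      exact hME.2 (by omega)
  · intro h l hl j hj1 hjt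
    set i := sl t l + j with hi
    have hi1 : 1 ≤ i := by omega
    have him : i ≤ sl t m := by
      have h1 : sl t (l + 1) ≤ sl t m := sl_mono t (by omega)
      rw [sl_succ] at h1
      omega
    have hbeq : bIdx t m i = l := bIdx_eq hpos hl hj1 hjt
    have hV := h i (Finset.mem_Icc.2 ⟨hi1, him⟩)
    rw [show (R i ω ∈ Vme t m i (xi T i ω)) =
      ((xi T i ω = 1 ∧ i - sl t (bIdx t m i) ≤ R i ω) ↔
        i = sl t (bIdx t m i) + t (bIdx t m i)) from rfl, hbeq] at hV
    rw [show i - sl t l = j by omega] at hV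
    constructor
    · intro hh
      have := hV.1 hh
      omega
    · intro hh
      exact hV.2 (by omega)

lemma prob_MEset (P : Measure Ω) [IsProbabilityMeasure P]
    (hTmeas : ∀ j, Measurable (T j)) (hRmeas : ∀ i, Measurable (R i))
    (hRindep : iIndepFun R P)
    (hRident : ∀ i, Measure.map (R i) P = Measure.map (R 0) P)
    (hTR : IndepFun (fun ω => fun j => T j ω) (fun ω => fun i => R i ω) P)
    {t : ℕ → ℕ} {m : ℕ} (hpos : ∀ l < m, 1 ≤ t l) :
    P (MEset T R t m) = WS P T R (sl t m) (Vme t m) := by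
  rw [MEset_eq_core hpos, core1' P hTmeas hRmeas hRindep hRident hTR]

lemma sl_shift (t : ℕ → ℕ) (l : ℕ) : sl t (l + 1) = t 0 + sl (fun l' => t (l' + 1)) l := by
  unfold sl
  rw [Finset.sum_range_succ' t l]
  ring

lemma prob_MEset_prod (P : Measure Ω) [IsProbabilityMeasure P]
    (hT1 : ∀ j ω, 1 ≤ T j ω)
    (hTmeas : ∀ j, Measurable (T j)) (hRmeas : ∀ i, Measurable (R i))
    (hTindep : iIndepFun T P)
    (hTident : ∀ j, Measure.map (T j) P = Measure.map (T 0) P)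
    (hRindep : iIndepFun R P)
    (hRident : ∀ i, Measure.map (R i) P = Measure.map (R 0) P)
    (hTR : IndepFun (fun ω => fun j => T j ω) (fun ω => fun i => R i ω) P) :
    ∀ (m : ℕ) (t : ℕ → ℕ), (∀ l < m, 1 ≤ t l) →
    P (MEset T R t m) = ∏ l ∈ Finset.range m, P (MEset T R (fun _ => t l) 1) := by
  intro m
  induction m with
  | zero =>
    intro t _
    have : MEset T R t 0 = Set.univ := by
      ext ω; simp [MEset]
    rw [this, measure_univ, Finset.range_zero, Finset.prod_empty]
  | succ m IH =>
    intro t hpos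
    set t' : ℕ → ℕ := fun l => t (l + 1) with ht'
    have hpos' : ∀ l < m, 1 ≤ t' l := fun l hl => hpos (l + 1) (by omega)
    have hpos1 : ∀ l < 1, 1 ≤ (fun _ => t 0) l := fun l _ => hpos 0 (by omega)
    have ht0 : 1 ≤ t 0 := hpos 0 (by omega)
    -- bIdx for first block
    have hbfirst : ∀ i, 1 ≤ i → i ≤ t 0 → bIdx t (m + 1) i = 0 := by
      intro i h1 h2
      have h3 := bIdx_eq (t := t) (m := m + 1) hpos (show 0 < m + 1 by omega) h1 h2
      rwa [sl_zero, zero_add] at h3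
    have hbfirst1 : ∀ i, 1 ≤ i → i ≤ t 0 → bIdx (fun _ => t 0) 1 i = 0 := by
      intro i h1 h2
      have h3 := bIdx_eq (t := fun _ => t 0) (m := 1) hpos1 (show 0 < 1 by omega) h1
        (show i ≤ (fun _ => t 0) 0 from h2)
      rwa [sl_zero, zero_add] at h3
    -- the `V` for the combined event
    have hslm : sl t (m + 1) = t 0 + sl t' m := sl_shift t m
    rw [prob_MEset P hTmeas hRmeas hRindep hRident hTR hpos, hslm]
    have hVk : Vme t (m + 1) (t 0) 0 = ∅ := by
      have hb : bIdx t (m + 1) (t 0) = 0 := hbfirst (t 0) ht0 le_rfl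
      unfold Vme
      rw [hb, sl_zero]
      ext r
      simp only [Set.mem_setOf_eq, Set.mem_empty_iff_false, iff_false]
      intro hcon
      have := hcon.2 (by omega)
      omega
    rw [WS_split P hT1 hTmeas hTindep hTident ht0 (Vme t (m + 1)) hVk]
    -- first factor
    have hfirst : WS P T R (t 0) (Vme t (m + 1)) = WS P T R (t 0) (Vme (fun _ => t 0) 1) := by
      apply WS_congr
      intro i hi b
      obtain ⟨hi1, hit⟩ := Finset.mem_Icc.1 hi
      unfold Vme
      rw [hbfirst i hi1 hit, hbfirst1 i hi1 hit]
      simp only [sl_zero]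
    -- second factor
    have hsecond : WS P T R (sl t' m) (fun j => Vme t (m + 1) (t 0 + j)) =
        WS P T R (sl t' m) (Vme t' m) := by
      apply WS_congr
      intro j hj b
      obtain ⟨hj1, hjm⟩ := Finset.mem_Icc.1 hj
      obtain ⟨hbm, hblt, hbub⟩ := bIdx_spec hpos' hj1 hjm
      set l' := bIdx t' m j with hl'
      have hsl' : sl t (l' + 1) = t 0 + sl t' l' := sl_shift t l'
      have hsl'' : sl t (l' + 1 + 1) = t 0 + sl t' (l' + 1) := sl_shift t (l' + 1)
      have hbig : bIdx t (m + 1) (t 0 + j) = l' + 1 := by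
        have hj'' : 1 ≤ t 0 + j - sl t (l' + 1) := by omega
        have hj''2 : t 0 + j - sl t (l' + 1) ≤ t (l' + 1) := by
          have h9 : sl t' (l' + 1) = sl t' l' + t' l' := sl_succ t' l'
          have h10 : t' l' = t (l' + 1) := rfl
          omega
        have := bIdx_eq (t := t) (m := m + 1) hpos (by omega : l' + 1 < m + 1) hj'' hj''2
        rwa [show sl t (l' + 1) + (t 0 + j - sl t (l' + 1)) = t 0 + j by omega] at this
      unfold Vme
      rw [hbig, hsl']
      have ha1 : t 0 + j - (t 0 + sl t' l') = j - sl t' l' := by omega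
      have ha2 : (t 0 + j = t 0 + sl t' l' + t (l' + 1)) = (j = sl t' l' + t' l') := by
        apply propext
        have h10 : t' l' = t (l' + 1) := rfl
        constructor <;> intro <;> omega
      rw [ha1, ha2]
    rw [hfirst, hsecond]
    have hIHres := IH t' hpos'
    rw [prob_MEset P hTmeas hRmeas hRindep hRident hTR hpos'] at hIHres
    have hsl1 : sl (fun _ => t 0) 1 = t 0 := by simp [sl]
    have hfirstP : P (MEset T R (fun _ => t 0) 1) = WS P T R (t 0) (Vme (fun _ => t 0) 1) := by
      have := prob_MEset P hTmeas hRmeas hRindep hRident hTR hpos1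
      rwa [hsl1] at this
    rw [← hfirstP, hIHres, Finset.prod_range_succ']
    rw [mul_comm]

/-! ### Final event identities and kappa values -/

lemma gap0_event {g : ℕ} (hg : 1 ≤ g) :
    {ω : Ω | gapY T R 0 ω = (g : ℕ∞)} = MEset T R (fun _ => g) 1 := by
  rw [← gaps_event_eq (T := T) (R := R) (fun _ => g) 1 (fun l _ => hg)]
  ext ω
  simp only [Set.mem_setOf_eq]
  constructor
  · intro h l hl
    have : l = 0 := by omega
    subst this
    exact h
  · intro h
    exact h 0 (by omega)

lemma kappa_le (P : Measure Ω) {i : ℕ} (hi : 1 ≤ i) :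
    P {ω | R 0 ω ∈ {r : ℕ | ¬ i ≤ r}} = alphaE P R (i - 1) := by
  unfold alphaE
  congr 1
  ext ω
  simp only [Set.mem_setOf_eq]
  omega

lemma kappa_ge (P : Measure Ω) [IsProbabilityMeasure P] (hRmeas : ∀ i, Measurable (R i))
    {i : ℕ} (hi : 1 ≤ i) :
    P {ω | R 0 ω ∈ {r : ℕ | i ≤ r}} = 1 - alphaE P R (i - 1) := by
  have hc : {ω : Ω | R 0 ω ∈ {r : ℕ | i ≤ r}} = {ω | R 0 ω ≤ i - 1}ᶜ := by
    ext ω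
    simp only [Set.mem_setOf_eq, Set.mem_compl_iff]
    omega
  have hm : MeasurableSet {ω : Ω | R 0 ω ≤ i - 1} := by
    have h0 : {ω : Ω | R 0 ω ≤ i - 1} = R 0 ⁻¹' {r : ℕ | r ≤ i - 1} := rfl
    rw [h0]
    exact (hRmeas 0) .of_discrete
  rw [hc, prob_compl_eq_one_sub hm]
  rfl

lemma kappa_Vme_single (P : Measure Ω) [IsProbabilityMeasure P]
    (hRmeas : ∀ i, Measurable (R i)) {g i b : ℕ}
    (hi1 : 1 ≤ i) (hig : i ≤ g) (hb : b = 0 ∨ b = 1) :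
    P {ω | R 0 ω ∈ Vme (fun _ => g) 1 i b} =
      (if i = g then 1 - alphaE P R (g - 1) ^ b else alphaE P R (i - 1) ^ b) := by
  have hg1 : 1 ≤ g := by omega
  have hb0 : bIdx (fun _ => g) 1 i = 0 := by
    have h3 := bIdx_eq (t := fun _ => g) (m := 1) (fun l _ => hg1) (show 0 < 1 by omega) hi1
      (show i ≤ (fun _ => g) 0 from hig)
    rwa [sl_zero, zero_add] at h3
  have hVme : Vme (fun _ => g) 1 i b = {r : ℕ | ((b = 1 ∧ i ≤ r) ↔ i = g)} := by
    unfold Vme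
    rw [hb0]
    simp only [sl_zero, Nat.sub_zero, zero_add]
  rw [hVme]
  rcases hb with rfl | rfl
  · -- b = 0
    by_cases hieq : i = g
    · rw [if_pos hieq]
      have : {r : ℕ | (((0:ℕ) = 1 ∧ i ≤ r) ↔ i = g)} = ∅ := by
        ext r
        simp only [Set.mem_setOf_eq, Set.mem_empty_iff_false, iff_false]
        intro hcon
        have := hcon.2 hieq
        omega
      rw [this]
      simp [pow_zero]
    · rw [if_neg hieq]
      have : {r : ℕ | (((0:ℕ) = 1 ∧ i ≤ r) ↔ i = g)} = Set.univ := by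
        ext r
        simp only [Set.mem_setOf_eq, Set.mem_univ, iff_true]
        constructor
        · rintro ⟨h01, -⟩; omega
        · intro h; exact absurd h hieq
      rw [this]
      simp [pow_zero]
  · -- b = 1
    by_cases hieq : i = g
    · rw [if_pos hieq, pow_one]
      subst hieq
      have hset : {r : ℕ | (((1:ℕ) = 1 ∧ i ≤ r) ↔ i = i)} = {r : ℕ | i ≤ r} := by
        ext r; simp
      rw [hset]
      exact kappa_ge P hRmeas hi1
    · rw [if_neg hieq, pow_one]
      have hset : {r : ℕ | (((1:ℕ) = 1 ∧ i ≤ r) ↔ i = g)} = {r : ℕ | ¬ i ≤ r} := by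
        ext r; simp [hieq]
      rw [hset]
      exact kappa_le P hi1

lemma prob_gap_single (P : Measure Ω) [IsProbabilityMeasure P]
    (hT1 : ∀ j ω, 1 ≤ T j ω)
    (hTmeas : ∀ j, Measurable (T j)) (hRmeas : ∀ i, Measurable (R i))
    (hTindep : iIndepFun T P)
    (hTident : ∀ j, Measure.map (T j) P = Measure.map (T 0) P)
    (hRindep : iIndepFun R P)
    (hRident : ∀ i, Measure.map (R i) P = Measure.map (R 0) P)
    (hTR : IndepFun (fun ω => fun j => T j ω) (fun ω => fun i => R i ω) P)
    {k : ℕ} (hk : 1 ≤ k) :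
    P {ω | gapY T R 0 ω = (k : ℕ∞)} =
      ∫⁻ ω, ∏ i ∈ Finset.Icc 1 k,
        (if i = k then 1 - alphaE P R (k - 1) ^ (xi T i ω)
         else alphaE P R (i - 1) ^ (xi T i ω)) ∂P := by
  have hpos1 : ∀ l < 1, 1 ≤ (fun _ => k) l := fun l _ => hk
  have hsl1 : sl (fun _ => k) 1 = k := by simp [sl]
  rw [gap0_event hk, prob_MEset P hTmeas hRmeas hRindep hRident hTR hpos1, hsl1]
  rw [core2 P hTmeas k (fun i b => if i = k then 1 - alphaE P R (k - 1) ^ b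
    else alphaE P R (i - 1) ^ b)]
  unfold WS
  refine Finset.sum_congr rfl fun A hA => ?_
  congr 1
  refine Finset.prod_congr rfl fun i hi => ?_
  obtain ⟨hi1, hik⟩ := Finset.mem_Icc.1 hi
  exact kappa_Vme_single P hRmeas hi1 hik (by by_cases h : i ∈ A <;> simp [h])

lemma xi_one_iff (hT1 : ∀ j ω, 1 ≤ T j ω) (ω : Ω) :
    xi T 1 ω = 1 ↔ T 0 ω = 1 := by
  rw [xi_eq_Xi, Xi_eq_one_iff]
  constructor
  · rintro ⟨j, hj⟩
    rcases Nat.eq_zero_or_pos j with rfl | hjpos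
    · rw [psum_zero] at hj
      exfalso
      have : (0 : ℕ) = 1 := by exact_mod_cast hj
      omega
    · have hle : T 0 ω ≤ psum (fun l => T l ω) j := le_psum _ hjpos
      rw [hj] at hle
      have h1 : (1 : ℕ∞) ≤ T 0 ω := hT1 0 ω
      have : T 0 ω = ((1 : ℕ) : ℕ∞) := le_antisymm hle h1
      simpa using this
  · intro h
    exact ⟨1, by rw [psum_one]; simpa using h⟩

lemma ge_gap_iff {k : ℕ} (hk : 1 ≤ k) (ω : Ω) :
    ((k : ℕ∞) ≤ gapY T R 0 ω) ↔ ∀ i, 1 ≤ i → i < k → Ydual T R i ω ≠ 1 := by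
  have hgap : gapY T R 0 ω = renewalY T R 1 ω := by
    unfold gapY
    rw [show renewalY T R 0 ω = 0 from rfl, tsub_zero]
  have hren : renewalY T R 1 ω =
      sInf {x : ℕ∞ | renewalY T R 0 ω < x ∧ ∃ i : ℕ, x = (i : ℕ∞) ∧ Ydual T R i ω = 1} := rfl
  rw [hgap, hren, le_sInf_iff]
  constructor
  · intro h i hi1 hik hYd
    have hmem : (i : ℕ∞) ∈ {x : ℕ∞ | renewalY T R 0 ω < x ∧
        ∃ i' : ℕ, x = (i' : ℕ∞) ∧ Ydual T R i' ω = 1} := by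
      refine ⟨?_, i, rfl, hYd⟩
      rw [show renewalY T R 0 ω = 0 from rfl]
      exact_mod_cast Nat.pos_of_ne_zero (by omega)
    have := h _ hmem
    have : k ≤ i := by exact_mod_cast this
    omega
  · rintro h x ⟨hpos, i, rfl, hYd⟩
    rw [show renewalY T R 0 ω = 0 from rfl] at hpos
    have hi1 : 1 ≤ i := by
      by_contra hcon
      push_neg at hcon
      interval_cases i
      simp at hpos
    rcases Nat.lt_or_ge i k with hik | hik
    · exact absurd hYd (h i hi1 hik)
    · exact_mod_cast hik

lemma noinf_iff {nn : ℕ} (ω : Ω) :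
    (∀ i, 1 ≤ i → i ≤ nn → Ydual T R i ω ≠ 1) ↔
      (∀ i, 1 ≤ i → i ≤ nn → ¬ (xi T i ω = 1 ∧ i ≤ R i ω)) := by
  constructor
  · intro h i hi1 hin hcon
    obtain ⟨hxi, hR⟩ := hcon
    refine h i hi1 hin ?_
    obtain ⟨i', rfl⟩ := Nat.exists_eq_succ_of_ne_zero (by omega : i ≠ 0)
    have hR' : i' + 1 ≤ R (i' + 1) ω := hR
    exact Ydual_succ.2 ⟨hxi, 0, by omega, Ydual_zero ω, by omega⟩
  · intro h i
    induction i using Nat.strong_induction_on with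
    | _ i IH =>
      intro hi1 hin hYd
      obtain ⟨i', rfl⟩ := Nat.exists_eq_succ_of_ne_zero (by omega : i ≠ 0)
      obtain ⟨hxi, j, hjlt, hYdj, hle⟩ := Ydual_succ.1 hYd
      rcases Nat.eq_zero_or_pos j with rfl | hjpos
      · exact h (i' + 1) hi1 hin ⟨hxi, by omega⟩
      · exact IH j hjlt hjpos (by omega) hYdj

lemma ge_gap_event (P : Measure Ω) [IsProbabilityMeasure P]
    (hTmeas : ∀ j, Measurable (T j)) (hRmeas : ∀ i, Measurable (R i))
    (hRindep : iIndepFun R P)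
    (hRident : ∀ i, Measure.map (R i) P = Measure.map (R 0) P)
    (hTR : IndepFun (fun ω => fun j => T j ω) (fun ω => fun i => R i ω) P)
    {k : ℕ} (hk : 1 ≤ k) :
    P {ω | (k : ℕ∞) ≤ gapY T R 0 ω} =
      ∫⁻ ω, ∏ i ∈ Finset.Icc 1 (k - 1), alphaE P R (i - 1) ^ (xi T i ω) ∂P := by
  have hev : {ω : Ω | (k : ℕ∞) ≤ gapY T R 0 ω} =
      {ω : Ω | ∀ i ∈ Finset.Icc 1 (k - 1), R i ω ∈
        (fun i b => if b = 1 then {r : ℕ | ¬ i ≤ r} else Set.univ) i (xi T i ω)} := by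
    ext ω
    simp only [Set.mem_setOf_eq]
    rw [ge_gap_iff hk ω]
    have h1 : (∀ i, 1 ≤ i → i < k → Ydual T R i ω ≠ 1) ↔
        (∀ i, 1 ≤ i → i ≤ k - 1 → Ydual T R i ω ≠ 1) := by
      constructor <;> intro h i hi1 hi2 <;> exact h i hi1 (by omega)
    rw [h1, noinf_iff]
    constructor
    · intro h i hi
      obtain ⟨hi1, hik⟩ := Finset.mem_Icc.1 hi
      have := h i hi1 hik
      rcases xi_cases T i ω with hx | hx
      · rw [hx, if_neg (by omega)]
        exact Set.mem_univ _
      · rw [hx, if_pos rfl]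
        intro hR
        exact this ⟨hx, hR⟩
    · intro h i hi1 hik ⟨hxi, hR⟩
      have := h i (Finset.mem_Icc.2 ⟨hi1, hik⟩)
      rw [hxi, if_pos rfl] at this
      exact this hR
  have hcore := core1' P hTmeas hRmeas hRindep hRident hTR (k - 1)
    (fun i b => if b = 1 then {r : ℕ | ¬ i ≤ r} else Set.univ)
  rw [hev, hcore, core2 P hTmeas (k - 1) (fun i b => alphaE P R (i - 1) ^ b)]
  unfold WS
  refine Finset.sum_congr rfl fun A hA => ?_
  congr 1
  refine Finset.prod_congr rfl fun i hi => ?_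
  obtain ⟨hi1, hik⟩ := Finset.mem_Icc.1 hi
  by_cases hiA : i ∈ A
  · rw [if_pos hiA]
    have hbeta : ((fun i b => if b = 1 then {r : ℕ | ¬ i ≤ r} else Set.univ) i 1 : Set ℕ) =
        {r : ℕ | ¬ i ≤ r} := by norm_num
    rw [hbeta, pow_one]
    exact kappa_le P hi1
  · rw [if_neg hiA]
    have hbeta : ((fun i b => if b = 1 then {r : ℕ | ¬ i ≤ r} else Set.univ) i 0 : Set ℕ) =
        Set.univ := by norm_num
    rw [hbeta, pow_zero]
    simp


section MainProof

variable {T : ℕ → Ω → ℕ∞} {R : ℕ → Ω → ℕ}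

lemma item2 (P : Measure Ω) [IsProbabilityMeasure P]
    (hT1 : ∀ j ω, 1 ≤ T j ω)
    (hTmeas : ∀ j, Measurable (T j)) (hRmeas : ∀ i, Measurable (R i))
    (hTindep : iIndepFun T P)
    (hTident : ∀ j, Measure.map (T j) P = Measure.map (T 0) P)
    (hRindep : iIndepFun R P)
    (hRident : ∀ i, Measure.map (R i) P = Measure.map (R 0) P)
    (hTR : IndepFun (fun ω => fun j => T j ω) (fun ω => fun i => R i ω) P)
    (m : ℕ) (t : Fin m → ℕ) (ht : ∀ l, 1 ≤ t l) :
    P {ω | ∀ l : Fin m, gapY T R (l : ℕ) ω = (t l : ℕ∞)} =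
      ∏ l : Fin m, P {ω | gapY T R 0 ω = (t l : ℕ∞)} := by
  classical
  set ts : ℕ → ℕ := fun l => if h : l < m then t ⟨l, h⟩ else 1 with hts
  have hpos : ∀ l < m, 1 ≤ ts l := by
    intro l hl
    rw [hts]
    simp only [dif_pos hl]
    exact ht _
  have hev : {ω : Ω | ∀ l : Fin m, gapY T R (l : ℕ) ω = (t l : ℕ∞)} = MEset T R ts m := by
    rw [← gaps_event_eq ts m hpos]
    ext ω
    simp only [Set.mem_setOf_eq]
    constructor
    · intro h l hl
      have h2 : ts l = t ⟨l, hl⟩ := by rw [hts]; simp only [dif_pos hl]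
      rw [h2]
      exact h ⟨l, hl⟩
    · intro h l
      have h2 := h l.1 l.2
      have h3 : ts l.1 = t l := by
        rw [hts]
        simp only [dif_pos l.2]
      rwa [h3] at h2
  rw [hev, prob_MEset_prod P hT1 hTmeas hRmeas hTindep hTident hRindep hRident hTR m ts hpos,
    ← Fin.prod_univ_eq_prod_range (fun l => P (MEset T R (fun _ => ts l) 1)) m]
  refine Finset.prod_congr rfl fun l _ => ?_
  have h3 : ts l.1 = t l := by
    rw [hts]
    simp only [dif_pos l.2]
  rw [gap0_event (ht l), h3]

lemma item3 (P : Measure Ω) [IsProbabilityMeasure P]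
    (hT1 : ∀ j ω, 1 ≤ T j ω)
    (hTmeas : ∀ j, Measurable (T j)) (hRmeas : ∀ i, Measurable (R i))
    (hRident : ∀ i, Measure.map (R i) P = Measure.map (R 0) P)
    (hTR : IndepFun (fun ω => fun j => T j ω) (fun ω => fun i => R i ω) P) :
    P {ω | gapY T R 0 ω = 1} = P {ω | T 0 ω = 1} * (1 - alphaE P R 0) := by
  classical
  have hone : ({ω : Ω | gapY T R 0 ω = 1} : Set Ω) =
      {ω | gapY T R 0 ω = ((1 : ℕ) : ℕ∞)} := by norm_num
  have hmg : MeasurableSet {g : ℕ → ℕ | 1 ≤ g 1} := by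
    have h0 : {g : ℕ → ℕ | 1 ≤ g 1} = (fun g : ℕ → ℕ => g 1) ⁻¹' {r | 1 ≤ r} := rfl
    rw [h0]
    exact (measurable_pi_apply 1) .of_discrete
  have hpre : patE T 1 {1} = (fun ω => fun j => T j ω) ⁻¹'
      {f : ℕ → ℕ∞ | ∀ i ∈ Finset.Icc 1 1,
        Xi i f = (if i ∈ ({1} : Finset ℕ) then 1 else 0)} := rfl
  have h2 : MEset T R (fun _ => 1) 1 =
      patE T 1 {1} ∩ ((fun ω => fun i => R i ω) ⁻¹' {g : ℕ → ℕ | 1 ≤ g 1}) := by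
    ext ω
    simp only [MEset, Set.mem_setOf_eq, Set.mem_inter_iff, Set.mem_preimage, patE]
    constructor
    · intro h
      have h0 := h 0 (by omega) 1 le_rfl le_rfl
      simp only [sl_zero, zero_add] at h0
      obtain ⟨hxi, hR⟩ := h0.2 (by trivial)
      refine ⟨fun i hi => ?_, hR⟩
      have hieq : i = 1 := by
        have := Finset.mem_Icc.1 hi
        omega
      subst hieq
      rw [if_pos (Finset.mem_singleton_self 1)]
      exact hxi
    · rintro ⟨hpat, hR⟩ l hl j hj1 hj2
      have hl0 : l = 0 := by omega
      have hj0 : j = 1 := by omega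
      subst hl0
      subst hj0
      simp only [sl_zero, zero_add]
      have hxi := hpat 1 (by simp)
      rw [if_pos (Finset.mem_singleton_self 1)] at hxi
      exact ⟨fun _ => by trivial, fun _ => ⟨hxi, hR⟩⟩
  rw [hone, gap0_event le_rfl, h2, hpre,
    hTR.measure_inter_preimage_eq_mul _ _ (measurableSet_XiSet 1 {1}) hmg]
  congr 1
  · rw [← hpre]
    have hpe : patE T 1 ({1} : Finset ℕ) = {ω : Ω | T 0 ω = 1} := by
      ext ω
      simp only [patE, Set.mem_setOf_eq]
      constructor
      · intro h
        have h1 := h 1 (by simp)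
        rw [if_pos (Finset.mem_singleton_self 1)] at h1
        exact (xi_one_iff hT1 ω).1 h1
      · intro h i hi
        have hieq : i = 1 := by
          have := Finset.mem_Icc.1 hi
          omega
        subst hieq
        rw [if_pos (Finset.mem_singleton_self 1)]
        exact (xi_one_iff hT1 ω).2 h
    rw [hpe]
  · have hY : ((fun ω => fun i => R i ω) ⁻¹' {g : ℕ → ℕ | 1 ≤ g 1} : Set Ω) =
        {ω | R 1 ω ∈ {r : ℕ | 1 ≤ r}} := rfl
    rw [hY, map_singleR P hRmeas hRident 1 _, kappa_ge P hRmeas le_rfl]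

end MainProof

/-- Assume `E T < ∞`. The dual process `Y` is an undelayed
renewal sequence: `Y_0 = 1`, the gaps between successive `1`'s are i.i.d.
copies of a variable `T_Y` with `P(T_Y = 1) = P(T = 1)(1 - α_0)`,
`P(T_Y = k) = E[(1 - α_{k-1}^{ξ_k}) ∏_{i=1}^{k-1} α_{i-1}^{ξ_i}]` and
`P(T_Y ≥ k) = E[∏_{i=1}^{k-1} α_{i-1}^{ξ_i}]` for `k ≥ 2`. -/
theorem dual_is_renewal
    {Ω : Type*} [MeasurableSpace Ω]
    (P : Measure Ω) [IsProbabilityMeasure P]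
    (T : ℕ → Ω → ℕ∞) (R : ℕ → Ω → ℕ)
    -- the inter-arrival times take values in {1,2,…} ∪ {∞}
    (hT1 : ∀ j ω, 1 ≤ T j ω)
    (hTmeas : ∀ j, Measurable (T j)) (hRmeas : ∀ i, Measurable (R i))
    -- the inter-arrival times are i.i.d.
    (hTindep : iIndepFun T P)
    (hTident : ∀ j, Measure.map (T j) P = Measure.map (T 0) P)
    -- the radii are i.i.d.
    (hRindep : iIndepFun R P)
    (hRident : ∀ i, Measure.map (R i) P = Measure.map (R 0) P)
    -- the radii are independent of the renewal sequence
    (hTR : IndepFun (fun ω => fun j => T j ω) (fun ω => fun i => R i ω) P)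
    (hET : ET P T < ⊤) :
    -- Y_0 = 1
    (∀ ω, Ydual T R 0 ω = 1) ∧
    -- the gaps between successive 1's of Y are i.i.d.
    (∀ m : ℕ, ∀ t : Fin m → ℕ, (∀ l, 1 ≤ t l) →
      P {ω | ∀ l : Fin m, gapY T R (l : ℕ) ω = (t l : ℕ∞)} =
        ∏ l : Fin m, P {ω | gapY T R 0 ω = (t l : ℕ∞)}) ∧
    -- P(T_Y = 1) = P(T = 1)(1 - α_0)
    (P {ω | gapY T R 0 ω = 1} = P {ω | T 0 ω = 1} * (1 - alphaE P R 0)) ∧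
    -- P(T_Y = k) = E[(1 - α_{k-1}^{ξ_k}) ∏_{i=1}^{k-1} α_{i-1}^{ξ_i}] for k ≥ 2
    (∀ k : ℕ, 2 ≤ k →
      P {ω | gapY T R 0 ω = (k : ℕ∞)} =
        ∫⁻ ω, (1 - (alphaE P R (k - 1)) ^ (xi T k ω)) *
          ∏ i ∈ Finset.Icc 1 (k - 1), (alphaE P R (i - 1)) ^ (xi T i ω) ∂P) ∧
    -- P(T_Y ≥ k) = E[∏_{i=1}^{k-1} α_{i-1}^{ξ_i}] for k ≥ 2
    (∀ k : ℕ, 2 ≤ k →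
      P {ω | (k : ℕ∞) ≤ gapY T R 0 ω} =
        ∫⁻ ω, ∏ i ∈ Finset.Icc 1 (k - 1), (alphaE P R (i - 1)) ^ (xi T i ω) ∂P) := by
  refine ⟨fun ω => Ydual_zero ω, ?_, ?_, ?_, ?_⟩
  · intro m t ht
    exact item2 P hT1 hTmeas hRmeas hTindep hTident hRindep hRident hTR m t ht
  · exact item3 P hT1 hTmeas hRmeas hRident hTR
  · intro k hk
    rw [prob_gap_single P hT1 hTmeas hRmeas hTindep hTident hRindep hRident hTR
      (by omega : 1 ≤ k)]
    refine lintegral_congr fun ω => ?_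
    have hins : Finset.Icc 1 k = insert k (Finset.Icc 1 (k - 1)) := by
      ext x
      simp only [Finset.mem_Icc, Finset.mem_insert]
      omega
    have hnot : k ∉ Finset.Icc 1 (k - 1) := by
      simp only [Finset.mem_Icc]
      omega
    rw [hins, Finset.prod_insert hnot, if_pos rfl]
    congr 1
    refine Finset.prod_congr rfl fun i hi => ?_
    rw [if_neg]
    have := Finset.mem_Icc.1 hi
    omega
  · intro k hk
    exact ge_gap_event P hTmeas hRmeas hRindep hRident hTR (by omega : 1 ≤ k)

end RenewalPerc
end
end

section
/- (Coupling merging bound) For every k ≥ 0 and every j ≥ 1, P(T_k ≥ j) ≤ ∏_{i=1}^{j−1} q^*_{k+i−1} (the empty product for j = 1 being 1). -/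
open MeasureTheory ProbabilityTheory Filter Set
open scoped ENNReal Classical

noncomputable section

namespace RenewalPerc

variable {Ω : Type*} [MeasurableSpace Ω]

lemma qstar_nonneg (q : ℕ → ℝ) (hq : ∀ i, 0 ≤ q i ∧ q i < 1) (i : ℕ) :
    0 ≤ qstar q i := by
  have := Finset.le_sup' (f := q) (b := 0) (by simp : 0 ∈ Finset.range (i + 1))
  exact le_trans (hq 0).1 this

lemma qstar_lt_one (q : ℕ → ℝ) (hq : ∀ i, 0 ≤ q i ∧ q i < 1) (i : ℕ) :
    qstar q i < 1 := by
  rw [qstar, Finset.sup'_lt_iff]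
  exact fun n _ => (hq n).2

lemma le_qstar (q : ℕ → ℝ) {m i : ℕ} (hm : m ≤ i) : q m ≤ qstar q i :=
  Finset.le_sup' (f := q) (Finset.mem_range.2 (Nat.lt_succ_of_le hm))

lemma hoc_le {Ω : Type*} [MeasurableSpace Ω] (q : ℕ → ℝ) (U : ℕ → Ω → ℝ)
    (n : ℕ) (l : ℕ) (ω : Ω) : hoc q U n l ω ≤ n + l := by
  induction l with
  | zero => simp [hoc]
  | succ l ih =>
      rw [hoc]
      dsimp only
      split
      · omega
      · omega

/-- **Coupling merging bound.** For every `k ≥ 0` and `j ≥ 1`,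
`P(T_k ≥ j) ≤ ∏_{i=1}^{j-1} q*_{k+i-1}`. -/
theorem coupling_merging_bound
    {Ω : Type*} [MeasurableSpace Ω]
    (P : Measure Ω) [IsProbabilityMeasure P]
    (q : ℕ → ℝ) (hq : ∀ i, 0 ≤ q i ∧ q i < 1)
    (U : ℕ → Ω → ℝ)
    (hUmeas : ∀ l, Measurable (U l))
    -- the U_l are i.i.d. uniform on [0,1)
    (hUindep : iIndepFun U P)
    (hUunif : ∀ l : ℕ, 1 ≤ l →
      Measure.map (U l) P = MeasureTheory.volume.restrict (Set.Ico (0 : ℝ) 1))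
    (k j : ℕ) (hj : 1 ≤ j) :
    P {ω | (j : ℕ∞) ≤ mergeT q U k ω} ≤
      ENNReal.ofReal (∏ i ∈ Finset.range (j - 1), qstar q (k + i)) := by
  classical
  set S : Finset ℕ := Finset.image (· + 1) (Finset.range (j - 1)) with hS
  set A : ℕ → Set Ω := fun l => U l ⁻¹' Set.Iic (qstar q (k + l - 1)) with hA
  -- Step 1: inclusion
  have hsub : {ω | (j : ℕ∞) ≤ mergeT q U k ω} ⊆ ⋂ l ∈ S, A l := by
    intro ω hω
    simp only [Set.mem_iInter]
    intro l hl
    obtain ⟨i, hi, rfl⟩ := Finset.mem_image.1 hl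
    have hij : i + 1 < j := by
      have := Finset.mem_range.1 hi; omega
    -- not all chains are zero at time i+1
    have hnot : ¬ ∀ n, n ≤ k → hoc q U n (i + 1) ω = 0 := by
      intro hall
      have hmem : ((i + 1 : ℕ) : ℕ∞) ∈
          {x : ℕ∞ | ∃ l : ℕ, x = (l : ℕ∞) ∧ 1 ≤ l ∧ ∀ n, n ≤ k → hoc q U n l ω = 0} :=
        ⟨i + 1, rfl, Nat.succ_le_succ (Nat.zero_le _), hall⟩
      have h1 : mergeT q U k ω ≤ ((i + 1 : ℕ) : ℕ∞) := csInf_le (OrderBot.bddBelow _) hmem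
      have h2 : (j : ℕ∞) ≤ ((i + 1 : ℕ) : ℕ∞) := le_trans (Set.mem_setOf.1 hω) h1
      exact absurd (Nat.cast_le.1 h2) (by omega)
    push_neg at hnot
    obtain ⟨n, hn, hne⟩ := hnot
    rw [hoc] at hne
    by_cases hU : U (i + 1) ω ≤ q (hoc q U n i ω)
    · have hle : hoc q U n i ω ≤ k + (i + 1) - 1 := by
        have := hoc_le q U n i ω; omega
      exact le_trans hU (le_qstar q hle)
    · simp [hU] at hne
  -- Step 2: measure of each event
  have hmeas : ∀ l ∈ S, P (A l) = ENNReal.ofReal (qstar q (k + l - 1)) := by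
    intro l hl
    obtain ⟨i, _, rfl⟩ := Finset.mem_image.1 hl
    have h1 : 1 ≤ i + 1 := Nat.succ_le_succ (Nat.zero_le _)
    have : P (A (i + 1)) = (Measure.map (U (i + 1)) P) (Set.Iic (qstar q (k + (i + 1) - 1))) := by
      rw [Measure.map_apply (hUmeas _) measurableSet_Iic]
    rw [this, hUunif _ h1, Measure.restrict_apply measurableSet_Iic]
    have hq0 := qstar_nonneg q hq (k + (i + 1) - 1)
    have hq1 := qstar_lt_one q hq (k + (i + 1) - 1)
    have hset : Set.Iic (qstar q (k + (i + 1) - 1)) ∩ Set.Ico (0 : ℝ) 1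
        = Set.Icc 0 (qstar q (k + (i + 1) - 1)) := by
      ext x
      simp only [Set.mem_inter_iff, Set.mem_Iic, Set.mem_Ico, Set.mem_Icc]
      constructor
      · rintro ⟨h1, h2, _⟩; exact ⟨h2, h1⟩
      · rintro ⟨h1, h2⟩; exact ⟨h2, h1, lt_of_le_of_lt h2 hq1⟩
    rw [hset, Real.volume_Icc, sub_zero]
  -- Step 3: independence
  have hindep : P (⋂ l ∈ S, A l) = ∏ l ∈ S, P (A l) := by
    refine hUindep.meas_biInter (fun l _ => ?_)
    exact ⟨Set.Iic (qstar q (k + l - 1)), measurableSet_Iic, rfl⟩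
  calc P {ω | (j : ℕ∞) ≤ mergeT q U k ω} ≤ P (⋂ l ∈ S, A l) := measure_mono hsub
    _ = ∏ l ∈ S, P (A l) := hindep
    _ = ∏ l ∈ S, ENNReal.ofReal (qstar q (k + l - 1)) := Finset.prod_congr rfl hmeas
    _ = ∏ i ∈ Finset.range (j - 1), ENNReal.ofReal (qstar q (k + i)) := by
        rw [hS, Finset.prod_image (by intro a _ b _ h; simp only at h; omega)]
        exact Finset.prod_congr rfl fun i _ => by
          rw [show k + (i + 1) - 1 = k + i from by omega]
    _ = ENNReal.ofReal (∏ i ∈ Finset.range (j - 1), qstar q (k + i)) := by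
        rw [← ENNReal.ofReal_prod_of_nonneg (fun i _ => qstar_nonneg q hq _)]


end RenewalPerc
end
end

section
/- (Doeblin for large indices) Suppose there exist ε > 0 and i* ∈ ℕ such that q_j ≤ 1 − ε for all j ≥ i*. Then sup_{k≥1} (∑_{j=1}^{k} P(T_k ≥ j))^2 < ∞; in particular (∑_{j=1}^{k} P(T_k ≥ j))^2 = O(k). -/
open MeasureTheory ProbabilityTheory Filter Set
open scoped ENNReal Classical

noncomputable section

namespace RenewalPerc

variable {Ω : Type*} [MeasurableSpace Ω]

/-- **Doeblin for large indices.** If `q_j ≤ 1 - ε` for all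
`j ≥ i*`, then `sup_k (∑_{j=1}^k P(T_k ≥ j))² < ∞`; in particular
`(∑_{j=1}^k P(T_k ≥ j))² = O(k)`. -/
theorem merging_doeblin_large_indices
    {Ω : Type*} [MeasurableSpace Ω]
    (P : Measure Ω) [IsProbabilityMeasure P]
    (q : ℕ → ℝ) (hq : ∀ i, 0 ≤ q i ∧ q i < 1)
    (U : ℕ → Ω → ℝ)
    (hUmeas : ∀ l, Measurable (U l))
    -- the U_l are i.i.d. uniform on [0,1)
    (hUindep : iIndepFun U P)
    (hUunif : ∀ l : ℕ, 1 ≤ l →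
      Measure.map (U l) P = MeasureTheory.volume.restrict (Set.Ico (0 : ℝ) 1))
    (ε : ℝ) (hε : 0 < ε) (istar : ℕ)
    (hdoeblin : ∀ j, istar ≤ j → q j ≤ 1 - ε) :
    (∃ c : ℝ, ∀ k : ℕ, 1 ≤ k →
      (∑ j ∈ Finset.Icc 1 k, (P {ω | (j : ℕ∞) ≤ mergeT q U k ω}).toReal) ^ 2 ≤ c) ∧
    (fun k : ℕ =>
        (∑ j ∈ Finset.Icc 1 k, (P {ω | (j : ℕ∞) ≤ mergeT q U k ω}).toReal) ^ 2)
      =O[Filter.atTop] (fun k : ℕ => (k : ℝ)) := by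
  classical
  -- the uniform bound on the transition probabilities
  set Q : ℝ := max (qstar q istar) (max (1 - ε) 0) with hQdef
  have hQ0 : 0 ≤ Q := le_max_of_le_right (le_max_right _ _)
  have hQ1 : Q < 1 := by
    have h1 : qstar q istar < 1 := by
      apply (Finset.sup'_lt_iff _).mpr
      intro i _
      exact (hq i).2
    have h2 : max (1 - ε) 0 < 1 := by
      apply max_lt _ one_pos
      linarith
    exact max_lt h1 h2
  have hqQ : ∀ j, q j ≤ Q := by
    intro j
    rcases le_or_gt j istar with h | h
    · exact le_max_of_le_left (Finset.le_sup' q (Finset.mem_range.mpr (Nat.lt_succ_of_le h)))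
    · exact le_max_of_le_right (le_max_of_le_left (hdoeblin j h.le))
  -- if U_l > Q then every chain is at 0 at time l (l ≥ 1)
  have hkill : ∀ (ω : Ω) (m : ℕ), Q < U (m + 1) ω → ∀ n, hoc q U n (m + 1) ω = 0 := by
    intro ω m hU n
    simp only [hoc]
    rw [if_neg]
    intro hle
    exact absurd (hle.trans (hqQ _)) (not_le.mpr hU)
  -- the key inclusion
  have hincl : ∀ k j : ℕ, 1 ≤ j →
      {ω | (j : ℕ∞) ≤ mergeT q U k ω} ⊆ ⋂ l ∈ Finset.Icc 1 (j - 1), U l ⁻¹' Set.Iic Q := by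
    intro k j hj ω hω
    simp only [Set.mem_iInter, Set.mem_preimage, Set.mem_Iic]
    intro l hl
    rw [Finset.mem_Icc] at hl
    by_contra hgt
    push_neg at hgt
    obtain ⟨m, rfl⟩ := Nat.exists_eq_add_of_le hl.1
    have h0 : ∀ n, n ≤ k → hoc q U n (1 + m) ω = 0 := by
      intro n _
      have := hkill ω m (by rwa [Nat.add_comm]) n
      rwa [Nat.add_comm]
    have hmem : ((1 + m : ℕ) : ℕ∞) ∈
        {x : ℕ∞ | ∃ l : ℕ, x = (l : ℕ∞) ∧ 1 ≤ l ∧ ∀ n, n ≤ k → hoc q U n l ω = 0} :=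
      ⟨1 + m, rfl, Nat.le_add_right 1 m, h0⟩
    have hle' : mergeT q U k ω ≤ ((1 + m : ℕ) : ℕ∞) := sInf_le hmem
    have hjle : (j : ℕ∞) ≤ ((1 + m : ℕ) : ℕ∞) := le_trans hω hle'
    have : j ≤ 1 + m := by exact_mod_cast hjle
    have : 1 + m ≤ j - 1 := hl.2
    omega
  -- probability of a single event
  have hsingle : ∀ l : ℕ, 1 ≤ l → P (U l ⁻¹' Set.Iic Q) = ENNReal.ofReal Q := by
    intro l hl
    have hmap : P (U l ⁻¹' Set.Iic Q) = (Measure.map (U l) P) (Set.Iic Q) := by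
      rw [Measure.map_apply (hUmeas l) measurableSet_Iic]
    rw [hmap, hUunif l hl, Measure.restrict_apply measurableSet_Iic]
    have : Set.Iic Q ∩ Set.Ico (0 : ℝ) 1 = Set.Icc 0 Q := by
      ext x
      simp only [Set.mem_inter_iff, Set.mem_Iic, Set.mem_Ico, Set.mem_Icc]
      constructor
      · rintro ⟨h1, h2, _⟩; exact ⟨h2, h1⟩
      · rintro ⟨h1, h2⟩; exact ⟨h2, h1, lt_of_le_of_lt h2 hQ1⟩
    rw [this, Real.volume_Icc, sub_zero]
  -- geometric bound on each summand
  have hterm : ∀ k j : ℕ, 1 ≤ j →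
      (P {ω | (j : ℕ∞) ≤ mergeT q U k ω}).toReal ≤ Q ^ (j - 1) := by
    intro k j hj
    have hmono : P {ω | (j : ℕ∞) ≤ mergeT q U k ω}
        ≤ P (⋂ l ∈ Finset.Icc 1 (j - 1), U l ⁻¹' Set.Iic Q) :=
      measure_mono (by simpa using hincl k j hj)
    have hindep := hUindep.measure_inter_preimage_eq_mul (Finset.Icc 1 (j - 1))
      (sets := fun _ => Set.Iic Q) (fun i _ => measurableSet_Iic)
    have hprod : P (⋂ l ∈ Finset.Icc 1 (j - 1), U l ⁻¹' Set.Iic Q)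
        = ENNReal.ofReal Q ^ (j - 1) := by
      rw [hindep]
      rw [Finset.prod_congr rfl (fun l hl => hsingle l (Finset.mem_Icc.mp hl).1)]
      rw [Finset.prod_const, Nat.card_Icc]; congr 1
    have h1 : P {ω | (j : ℕ∞) ≤ mergeT q U k ω} ≤ ENNReal.ofReal Q ^ (j - 1) := by
      rw [← hprod]; exact hmono
    calc (P {ω | (j : ℕ∞) ≤ mergeT q U k ω}).toReal
        ≤ (ENNReal.ofReal Q ^ (j - 1)).toReal :=
          ENNReal.toReal_mono (by simp [ENNReal.pow_ne_top, ENNReal.ofReal_ne_top]) h1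
      _ = Q ^ (j - 1) := by
          rw [ENNReal.toReal_pow, ENNReal.toReal_ofReal hQ0]
  -- bound on the sum
  have hsum : ∀ k : ℕ,
      (∑ j ∈ Finset.Icc 1 k, (P {ω | (j : ℕ∞) ≤ mergeT q U k ω}).toReal) ≤ (1 - Q)⁻¹ := by
    intro k
    have h1 : (∑ j ∈ Finset.Icc 1 k, (P {ω | (j : ℕ∞) ≤ mergeT q U k ω}).toReal)
        ≤ ∑ j ∈ Finset.Icc 1 k, Q ^ (j - 1) :=
      Finset.sum_le_sum (fun j hj => hterm k j (Finset.mem_Icc.mp hj).1)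
    have h2 : ∑ j ∈ Finset.Icc 1 k, Q ^ (j - 1) = ∑ i ∈ Finset.range k, Q ^ i := by
      rw [← Finset.Ico_add_one_right_eq_Icc, Finset.sum_Ico_eq_sum_range]
      simp
    have h3 : ∑ i ∈ Finset.range k, Q ^ i ≤ (1 - Q)⁻¹ := by
      rw [← tsum_geometric_of_lt_one hQ0 hQ1]
      exact Summable.sum_le_tsum _ (fun i _ => pow_nonneg hQ0 i)
        ((hasSum_geometric_of_lt_one hQ0 hQ1).summable)
    calc _ ≤ ∑ j ∈ Finset.Icc 1 k, Q ^ (j - 1) := h1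
      _ = _ := h2
      _ ≤ _ := h3
  have hsumnn : ∀ k : ℕ,
      0 ≤ ∑ j ∈ Finset.Icc 1 k, (P {ω | (j : ℕ∞) ≤ mergeT q U k ω}).toReal :=
    fun k => Finset.sum_nonneg (fun j _ => ENNReal.toReal_nonneg)
  have hM : 0 ≤ (1 - Q)⁻¹ := by
    have : 0 < 1 - Q := by linarith
    positivity
  have hsq : ∀ k : ℕ,
      (∑ j ∈ Finset.Icc 1 k, (P {ω | (j : ℕ∞) ≤ mergeT q U k ω}).toReal) ^ 2
        ≤ ((1 - Q)⁻¹) ^ 2 :=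
    fun k => pow_le_pow_left₀ (hsumnn k) (hsum k) 2
  refine ⟨⟨((1 - Q)⁻¹) ^ 2, fun k _ => hsq k⟩, ?_⟩
  rw [Asymptotics.isBigO_iff]
  refine ⟨((1 - Q)⁻¹) ^ 2, ?_⟩
  filter_upwards [Filter.eventually_ge_atTop 1] with k hk
  rw [Real.norm_eq_abs, Real.norm_eq_abs,
    abs_of_nonneg (pow_nonneg (hsumnn k) 2), abs_of_nonneg (by positivity : (0:ℝ) ≤ (k:ℝ))]
  calc (∑ j ∈ Finset.Icc 1 k, (P {ω | (j : ℕ∞) ≤ mergeT q U k ω}).toReal) ^ 2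
      ≤ ((1 - Q)⁻¹) ^ 2 := hsq k
    _ = ((1 - Q)⁻¹) ^ 2 * 1 := by ring
    _ ≤ ((1 - Q)⁻¹) ^ 2 * (k : ℝ) := by
        apply mul_le_mul_of_nonneg_left _ (by positivity)
        exact_mod_cast hk


end RenewalPerc
end
end
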